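/- (Theorem 2, causal Mermin inequality.) Let P be a probability distribution over the eighteen binary variables (a1,a2,a3,b1,b2,b3,c1,c2,c3,x1,x2,y1,y2,z1,z2,λ_A,λ_B,λ_C), writing x⃗=(x1,x2), y⃗=(y1,y2), z⃗=(z1,z2), 𝟎=(0,0), 𝟏=(1,1). Suppose P satisfies: (i) P(x⃗,y⃗,z⃗) > 0 for all values of the inputs; (ii) definite causal order: a1 ⫫_P x2 | (x1, λ_A=0) and a2 ⫫_P x1 | (x2, λ_A=1), and the analogous conditions for (b1,b2,y1,y2,λ_B) and (c1,c2,z1,z2,λ_C); (iii) relativistic causality: (λ_A,λ_B,λ_C) ⫫_P (x⃗,y⃗,z⃗), (λ_A,b3,c3) ⫫_P x⃗ | (y⃗,z⃗), (a3,λ_B,c3) ⫫_P y⃗ | (x⃗,z⃗), (a3,b3,λ_C) ⫫_P z⃗ | (x⃗,y⃗); (iv) (a1,a2,λ_A) ⫫_P (y⃗,z⃗) | x⃗, (b1,b2,λ_B) ⫫_P (x⃗,z⃗) | y⃗, (c1,c2,λ_C) ⫫_P (x⃗,y⃗) | z⃗. Then P(a1⊕b1⊕c1=0 | x⃗=𝟏,y⃗=𝟏,z⃗=𝟏)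 + P(a1⊕b3⊕c3=1 | x⃗=𝟏,y⃗=𝟎,z⃗=𝟎) + P(a3⊕b1⊕c3=1 | x⃗=𝟎,y⃗=𝟏,z⃗=𝟎) + P(a3⊕b3⊕c1=1 | x⃗=𝟎,y⃗=𝟎,z⃗=𝟏) − 2[P(a1=1 | x1x2=10) + P(a2=1 | x1x2=01) + P(a1=a2=0 | x1x2=11) + P(b1=1 | y1y2=10) + P(b2=1 | y1y2=01) + P(b1=b2=0 | y1y2=11) + P(c1=1 | z1z2=10) + P(c2=1 | z1z2=01) + P(c1=c2=0 | z1z2=11)] ≤ 3, where ⊕ denotes addition mod 2 and the conditional probabilities in the bracket are independent of the omitted input variables by (iv). -/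

import Mathlib

set_option synthInstance.maxSize 100000
set_option maxHeartbeats 1000000

/-- The nine binary outcome variables. -/
structure Outcome where
  a1 : Bool
  a2 : Bool
  a3 : Bool
  b1 : Bool
  b2 : Bool
  b3 : Bool
  c1 : Bool
  c2 : Bool
  c3 : Bool
deriving DecidableEq, Fintype

/-- The six binary input variables `x⃗ = (x1,x2)`, `y⃗ = (y1,y2)`, `z⃗ = (z1,z2)`. -/
structure Inputs where
  x1 : Bool
  x2 : Bool
  y1 : Bool
  y2 : Bool
  z1 : Bool
  z2 : Bool
deriving DecidableEq, Fintype

/-- The three binary hidden causal order variables `λ_A, λ_B, λ_C`. -/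
structure Lams where
  lA : Bool
  lB : Bool
  lC : Bool
deriving DecidableEq, Fintype

/-- The probability of the event `E` under the distribution `P`. -/
def pr (P : Outcome → Inputs → Lams → ℝ) (E : Outcome → Inputs → Lams → Prop)
    [∀ o i l, Decidable (E o i l)] : ℝ :=
  ∑ o : Outcome, ∑ i : Inputs, ∑ l : Lams, if E o i l then P o i l else 0

/-- The conditional probability `P(E | F) = P(E ∧ F) / P(F)`. -/
noncomputable def cpr (P : Outcome → Inputs → Lams → ℝ) (E F : Outcome → Inputs → Lams → Prop)
    [∀ o i l, Decidable (E o i l)] [∀ o i l, Decidable (F o i l)] : ℝ :=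
  pr P (fun o i l => E o i l ∧ F o i l) / pr P F

lemma merminBool1 : ∀ a b c lA lB lC : Bool, Bool.xor a (Bool.xor b c) = false →
    (Bool.xor lA (Bool.xor lB lC) = false ∨ ¬(a = lA) ∨ ¬(b = lB) ∨ ¬(c = lC)) := by decide

lemma merminBool2 : ∀ a b c lA : Bool, Bool.xor a (Bool.xor b c) = true →
    (Bool.xor lA (Bool.xor b c) = true ∨ ¬(a = lA)) := by decide

lemma merminBool4 : ∀ a3 b3 c3 lA lB lC : Bool,
    ¬(Bool.xor lA (Bool.xor lB lC) = false ∧ Bool.xor lA (Bool.xor b3 c3) = true ∧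
      Bool.xor a3 (Bool.xor lB c3) = true ∧ Bool.xor a3 (Bool.xor b3 lC) = true) := by decide

lemma merminBool2b : ∀ a b c lB : Bool, Bool.xor a (Bool.xor b c) = true →
    (Bool.xor a (Bool.xor lB c) = true ∨ ¬(b = lB)) := by decide

lemma merminBool2c : ∀ a b c lC : Bool, Bool.xor a (Bool.xor b c) = true →
    (Bool.xor a (Bool.xor b lC) = true ∨ ¬(c = lC)) := by decide
section Helpers

variable (P : Outcome → Inputs → Lams → ℝ)

lemma pr_nonneg (hnn : ∀ o i l, 0 ≤ P o i l) (E : Outcome → Inputs → Lams → Prop)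
    [∀ o i l, Decidable (E o i l)] : 0 ≤ pr P E := by
  refine Finset.sum_nonneg fun o _ => Finset.sum_nonneg fun i _ => Finset.sum_nonneg fun l _ => ?_
  split <;> simp [hnn]

lemma pr_mono (hnn : ∀ o i l, 0 ≤ P o i l) {E F : Outcome → Inputs → Lams → Prop}
    [∀ o i l, Decidable (E o i l)] [∀ o i l, Decidable (F o i l)]
    (h : ∀ o i l, E o i l → F o i l) : pr P E ≤ pr P F := by
  refine Finset.sum_le_sum fun o _ => Finset.sum_le_sum fun i _ => Finset.sum_le_sum fun l _ => ?_
  by_cases hE : E o i l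
  · rw [if_pos hE, if_pos (h o i l hE)]
  · rw [if_neg hE]; split <;> simp [hnn]

lemma pr_congr {E F : Outcome → Inputs → Lams → Prop}
    [∀ o i l, Decidable (E o i l)] [∀ o i l, Decidable (F o i l)]
    (h : ∀ o i l, E o i l ↔ F o i l) : pr P E = pr P F := by
  refine Finset.sum_congr rfl fun o _ => Finset.sum_congr rfl fun i _ =>
    Finset.sum_congr rfl fun l _ => ?_
  exact if_congr (h o i l) rfl rfl

lemma pr_add {E F G : Outcome → Inputs → Lams → Prop}
    [∀ o i l, Decidable (E o i l)] [∀ o i l, Decidable (F o i l)] [∀ o i l, Decidable (G o i l)]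
    (h : ∀ o i l, E o i l ↔ (F o i l ∨ G o i l)) (hd : ∀ o i l, ¬(F o i l ∧ G o i l)) :
    pr P E = pr P F + pr P G := by
  unfold pr
  rw [← Finset.sum_add_distrib]
  refine Finset.sum_congr rfl fun o _ => ?_
  rw [← Finset.sum_add_distrib]
  refine Finset.sum_congr rfl fun i _ => ?_
  rw [← Finset.sum_add_distrib]
  refine Finset.sum_congr rfl fun l _ => ?_
  by_cases hF : F o i l <;> by_cases hG : G o i l <;>
    simp [hF, hG, h o i l] <;> exact absurd ⟨hF, hG⟩ (hd o i l)

lemma pr_le_add2 (hnn : ∀ o i l, 0 ≤ P o i l) {E F G : Outcome → Inputs → Lams → Prop}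
    [∀ o i l, Decidable (E o i l)] [∀ o i l, Decidable (F o i l)] [∀ o i l, Decidable (G o i l)]
    (h : ∀ o i l, E o i l → (F o i l ∨ G o i l)) :
    pr P E ≤ pr P F + pr P G := by
  unfold pr
  rw [← Finset.sum_add_distrib]
  refine Finset.sum_le_sum fun o _ => ?_
  rw [← Finset.sum_add_distrib]
  refine Finset.sum_le_sum fun i _ => ?_
  rw [← Finset.sum_add_distrib]
  refine Finset.sum_le_sum fun l _ => ?_
  by_cases hF : F o i l <;> by_cases hG : G o i l <;> by_cases hE : E o i l <;>
    simp [hF, hG, hE, hnn o i l] <;> first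
      | (rcases h o i l hE with hh | hh <;> simp_all)
      | (have := hnn o i l; linarith)

lemma pr_le_add4 (hnn : ∀ o i l, 0 ≤ P o i l) {E F G H K : Outcome → Inputs → Lams → Prop}
    [∀ o i l, Decidable (E o i l)] [∀ o i l, Decidable (F o i l)] [∀ o i l, Decidable (G o i l)]
    [∀ o i l, Decidable (H o i l)] [∀ o i l, Decidable (K o i l)]
    (h : ∀ o i l, E o i l → (F o i l ∨ G o i l ∨ H o i l ∨ K o i l)) :
    pr P E ≤ pr P F + pr P G + pr P H + pr P K := by
  calc pr P E ≤ pr P (fun o i l => F o i l ∨ G o i l) + pr P (fun o i l => H o i l ∨ K o i l) := by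
        refine pr_le_add2 P hnn fun o i l hE => ?_
        rcases h o i l hE with h' | h' | h' | h' <;> tauto
    _ ≤ (pr P F + pr P G) + (pr P H + pr P K) := by
        gcongr <;> [skip; skip] <;>
          exact pr_le_add2 P hnn (fun o i l hh => hh)
    _ = pr P F + pr P G + pr P H + pr P K := by ring

lemma pr_four_le_three (hnn : ∀ o i l, 0 ≤ P o i l)
    {F1 F2 F3 F4 C : Outcome → Inputs → Lams → Prop}
    [∀ o i l, Decidable (F1 o i l)] [∀ o i l, Decidable (F2 o i l)]
    [∀ o i l, Decidable (F3 o i l)] [∀ o i l, Decidable (F4 o i l)]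
    [∀ o i l, Decidable (C o i l)]
    (hx : ∀ o i l, ¬(F1 o i l ∧ F2 o i l ∧ F3 o i l ∧ F4 o i l))
    (h1 : ∀ o i l, F1 o i l → C o i l) (h2 : ∀ o i l, F2 o i l → C o i l)
    (h3 : ∀ o i l, F3 o i l → C o i l) (h4 : ∀ o i l, F4 o i l → C o i l) :
    pr P F1 + pr P F2 + pr P F3 + pr P F4 ≤ 3 * pr P C := by
  unfold pr
  rw [Finset.mul_sum, ← Finset.sum_add_distrib, ← Finset.sum_add_distrib, ← Finset.sum_add_distrib]
  refine Finset.sum_le_sum fun o _ => ?_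
  rw [Finset.mul_sum, ← Finset.sum_add_distrib, ← Finset.sum_add_distrib, ← Finset.sum_add_distrib]
  refine Finset.sum_le_sum fun i _ => ?_
  rw [Finset.mul_sum, ← Finset.sum_add_distrib, ← Finset.sum_add_distrib, ← Finset.sum_add_distrib]
  refine Finset.sum_le_sum fun l _ => ?_
  have hP := hnn o i l
  by_cases hc : C o i l
  · have hcon := hx o i l
    by_cases g1 : F1 o i l <;> by_cases g2 : F2 o i l <;> by_cases g3 : F3 o i l <;>
      by_cases g4 : F4 o i l <;> simp [g1, g2, g3, g4, hc] <;> first | tauto | linarith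
  · have n1 : ¬ F1 o i l := fun h => hc (h1 o i l h)
    have n2 : ¬ F2 o i l := fun h => hc (h2 o i l h)
    have n3 : ¬ F3 o i l := fun h => hc (h3 o i l h)
    have n4 : ¬ F4 o i l := fun h => hc (h4 o i l h)
    simp [n1, n2, n3, n4, hc]

lemma pr_decomp {α : Type} [Fintype α] [DecidableEq α]
    (f : Outcome → Inputs → Lams → α) (E : Outcome → Inputs → Lams → Prop)
    [∀ o i l, Decidable (E o i l)] :
    pr P E = ∑ a : α, pr P (fun o i l => E o i l ∧ f o i l = a) := by
  unfold pr
  symm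
  rw [Finset.sum_comm]
  refine Finset.sum_congr rfl fun o _ => ?_
  rw [Finset.sum_comm]
  refine Finset.sum_congr rfl fun i _ => ?_
  rw [Finset.sum_comm]
  refine Finset.sum_congr rfl fun l _ => ?_
  by_cases hE : E o i l
  · simp [hE]
  · simp [hE]

end Helpers
section Lift

variable (P : Outcome → Inputs → Lams → ℝ)

lemma pr_point_ite {α : Type} [Fintype α] [DecidableEq α]
    (f : Outcome → Inputs → Lams → α) (E : α → Prop) [DecidablePred E]
    (C : Outcome → Inputs → Lams → Prop) [∀ o i l, Decidable (C o i l)] (a : α) :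
    pr P (fun o i l => (E (f o i l) ∧ C o i l) ∧ f o i l = a)
      = if E a then pr P (fun o i l => f o i l = a ∧ C o i l) else 0 := by
  by_cases hEa : E a
  · rw [if_pos hEa]
    refine pr_congr P fun o i l => ?_
    constructor
    · rintro ⟨⟨_, hC⟩, hf⟩; exact ⟨hf, hC⟩
    · rintro ⟨hf, hC⟩; exact ⟨⟨hf ▸ hEa, hC⟩, hf⟩
  · rw [if_neg hEa]
    have h0 : pr P (fun o i l => (E (f o i l) ∧ C o i l) ∧ f o i l = a)
        = pr P (fun _ _ _ => False) := by
      refine pr_congr P fun o i l => ?_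
      simp only [iff_false]
      rintro ⟨⟨hE', _⟩, hf⟩
      exact hEa (hf ▸ hE')
    rw [h0]
    unfold pr
    simp

lemma pr_lift_decomp {α : Type} [Fintype α] [DecidableEq α]
    (f : Outcome → Inputs → Lams → α) (E : α → Prop) [DecidablePred E]
    (C : Outcome → Inputs → Lams → Prop) [∀ o i l, Decidable (C o i l)] :
    pr P (fun o i l => E (f o i l) ∧ C o i l)
      = ∑ a : α, if E a then pr P (fun o i l => f o i l = a ∧ C o i l) else 0 := by
  rw [pr_decomp P f (fun o i l => E (f o i l) ∧ C o i l)]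
  exact Finset.sum_congr rfl fun a _ => pr_point_ite P f E C a

/-- Lift pointwise independence of `l` and `i` to arbitrary events. -/
lemma indep_lift
    (hRC0 : ∀ (lv : Lams) (iv : Inputs),
      pr P (fun _ i l => l = lv ∧ i = iv)
        = pr P (fun _ _ l => l = lv) * pr P (fun _ i _ => i = iv))
    (E : Lams → Prop) [DecidablePred E] (F : Inputs → Prop) [DecidablePred F] :
    pr P (fun _ i l => E l ∧ F i)
      = pr P (fun _ _ l => E l) * pr P (fun _ i _ => F i) := by
  have hL : pr P (fun _ i l => E l ∧ F i)
      = ∑ p : Lams × Inputs, if E p.1 ∧ F p.2 then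
          pr P (fun _ i l => (l, i) = p) else 0 := by
    have h := pr_lift_decomp P (fun _ i l => (l, i)) (fun p => E p.1 ∧ F p.2)
      (fun _ _ _ => True)
    calc pr P (fun _ i l => E l ∧ F i)
        = pr P (fun o i l => (E (l, i).1 ∧ F (l, i).2) ∧ True) := pr_congr P (by tauto)
      _ = ∑ p : Lams × Inputs, if E p.1 ∧ F p.2 then
            pr P (fun o i l => (l, i) = p ∧ True) else 0 := h
      _ = ∑ p : Lams × Inputs, if E p.1 ∧ F p.2 then
            pr P (fun _ i l => (l, i) = p) else 0 := by
          refine Finset.sum_congr rfl fun p _ => ?_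
          congr 1
          exact pr_congr P (by tauto)
  have hE : pr P (fun _ _ l => E l)
      = ∑ lv : Lams, if E lv then pr P (fun _ _ l => l = lv) else 0 := by
    have h := pr_lift_decomp P (fun _ _ l => l) E (fun _ _ _ => True)
    calc pr P (fun _ _ l => E l)
        = pr P (fun o i l => E l ∧ True) := pr_congr P (by tauto)
      _ = ∑ lv : Lams, if E lv then pr P (fun o i l => l = lv ∧ True) else 0 := h
      _ = ∑ lv : Lams, if E lv then pr P (fun _ _ l => l = lv) else 0 := by
          refine Finset.sum_congr rfl fun lv _ => ?_
          congr 1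
          exact pr_congr P (by tauto)
  have hF : pr P (fun _ i _ => F i)
      = ∑ iv : Inputs, if F iv then pr P (fun _ i _ => i = iv) else 0 := by
    have h := pr_lift_decomp P (fun _ i _ => i) F (fun _ _ _ => True)
    calc pr P (fun _ i _ => F i)
        = pr P (fun o i l => F i ∧ True) := pr_congr P (by tauto)
      _ = ∑ iv : Inputs, if F iv then pr P (fun o i l => i = iv ∧ True) else 0 := h
      _ = ∑ iv : Inputs, if F iv then pr P (fun _ i _ => i = iv) else 0 := by
          refine Finset.sum_congr rfl fun iv _ => ?_
          congr 1
          exact pr_congr P (by tauto)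
  rw [hL, hE, hF, Finset.sum_mul_sum, Fintype.sum_prod_type]
  refine Finset.sum_congr rfl fun lv _ => Finset.sum_congr rfl fun iv _ => ?_
  have hp : pr P (fun _ i l => (l, i) = (lv, iv))
      = pr P (fun _ i l => l = lv ∧ i = iv) := by
    refine pr_congr P fun o i l => ?_
    rw [Prod.ext_iff]
  by_cases hEp : E lv <;> by_cases hFp : F iv <;>
    simp [hEp, hFp, hp, hRC0 lv iv]

/-- Lift pointwise conditional independence to arbitrary events. -/
lemma ci_lift {α β : Type} [Fintype α] [DecidableEq α] [Fintype β] [DecidableEq β]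
    (f : Outcome → Lams → α) (g : Inputs → β) (C : Inputs → Prop) [DecidablePred C]
    (hpt : ∀ (a : α) (b : β),
      pr P (fun o i l => f o l = a ∧ g i = b ∧ C i) * pr P (fun _ i _ => C i)
        = pr P (fun o i l => f o l = a ∧ C i) * pr P (fun _ i _ => g i = b ∧ C i))
    (E : α → Prop) [DecidablePred E] (F : β → Prop) [DecidablePred F] :
    pr P (fun o i l => E (f o l) ∧ F (g i) ∧ C i) * pr P (fun _ i _ => C i)
      = pr P (fun o i l => E (f o l) ∧ C i) * pr P (fun _ i _ => F (g i) ∧ C i) := by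
  have hL : pr P (fun o i l => E (f o l) ∧ F (g i) ∧ C i)
      = ∑ p : α × β, if E p.1 ∧ F p.2 then
          pr P (fun o i l => f o l = p.1 ∧ g i = p.2 ∧ C i) else 0 := by
    have h := pr_lift_decomp P (fun o (i : Inputs) l => (f o l, g i))
      (fun p => E p.1 ∧ F p.2) (fun _ i _ => C i)
    calc pr P (fun o i l => E (f o l) ∧ F (g i) ∧ C i)
        = pr P (fun o i l => (E (f o l, g i).1 ∧ F (f o l, g i).2) ∧ C i) :=
          pr_congr P (by tauto)
      _ = ∑ p : α × β, if E p.1 ∧ F p.2 then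
            pr P (fun o i l => (f o l, g i) = p ∧ C i) else 0 := h
      _ = ∑ p : α × β, if E p.1 ∧ F p.2 then
            pr P (fun o i l => f o l = p.1 ∧ g i = p.2 ∧ C i) else 0 := by
          refine Finset.sum_congr rfl fun p _ => ?_
          congr 1
          refine pr_congr P fun o i l => ?_
          rw [Prod.ext_iff]
          tauto
  have hE : pr P (fun o i l => E (f o l) ∧ C i)
      = ∑ a : α, if E a then pr P (fun o i l => f o l = a ∧ C i) else 0 :=
    pr_lift_decomp P (fun o (i : Inputs) l => f o l) E (fun _ i _ => C i)
  have hF : pr P (fun _ i _ => F (g i) ∧ C i)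
      = ∑ b : β, if F b then pr P (fun _ i _ => g i = b ∧ C i) else 0 :=
    pr_lift_decomp P (fun (o : Outcome) i (l : Lams) => g i) F (fun _ i _ => C i)
  rw [hL, hE, hF, Finset.sum_mul, Finset.sum_mul_sum, Fintype.sum_prod_type]
  refine Finset.sum_congr rfl fun a _ => Finset.sum_congr rfl fun b _ => ?_
  by_cases hEa : E a <;> by_cases hFb : F b <;>
    simp [hEa, hFb, hpt a b]

end Lift
section Party

variable (P : Outcome → Inputs → Lams → ℝ)

/-- Core one-sided causal-order consequence: if `A ⫫ V | (U, L = w)` and `L ⫫ (U,V)`,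
then the weight of `A = true` at `(U,V) = (t,t)` with `L = w`, transported to `(t,f)`. -/
lemma shift (hnn : ∀ o i l, 0 ≤ P o i l)
    (A : Outcome → Bool) (U V : Inputs → Bool) (L : Lams → Bool) (w : Bool)
    (h0 : ∀ a1v x2v x1v : Bool,
      pr P (fun o i l => A o = a1v ∧ V i = x2v ∧ U i = x1v ∧ L l = w)
          * pr P (fun _ i l => U i = x1v ∧ L l = w)
        = pr P (fun o i l => A o = a1v ∧ U i = x1v ∧ L l = w)
          * pr P (fun _ i l => V i = x2v ∧ U i = x1v ∧ L l = w))
    (hind : ∀ wv u v : Bool,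
      pr P (fun _ i l => L l = wv ∧ (U i = u ∧ V i = v))
        = pr P (fun _ _ l => L l = wv) * pr P (fun _ i _ => U i = u ∧ V i = v))
    (hpos : ∀ u v : Bool, 0 < pr P (fun _ i _ => U i = u ∧ V i = v)) :
    pr P (fun o i l => A o = true ∧ V i = true ∧ U i = true ∧ L l = w)
        * pr P (fun _ i _ => U i = true ∧ V i = false)
      ≤ pr P (fun o i l => A o = true ∧ (U i = true ∧ V i = false))
        * pr P (fun _ i _ => U i = true ∧ V i = true) := by
  set μ := pr P (fun _ _ l => L l = w) with hμdef
  have hμ0 : 0 ≤ μ := pr_nonneg P hnn _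
  have hm : ∀ v : Bool, pr P (fun _ i l => V i = v ∧ U i = true ∧ L l = w)
      = μ * pr P (fun _ i _ => U i = true ∧ V i = v) := by
    intro v
    rw [pr_congr P (F := fun _ i l => L l = w ∧ (U i = true ∧ V i = v)) (by tauto)]
    exact hind w true v
  have hD : pr P (fun _ i l => U i = true ∧ L l = w)
      = pr P (fun _ i l => V i = true ∧ U i = true ∧ L l = w)
        + pr P (fun _ i l => V i = false ∧ U i = true ∧ L l = w) := by
    refine pr_add P (fun o i l => ?_) (fun o i l => ?_)
    · cases hv : V i <;> tauto
    · rintro ⟨⟨h1, _⟩, ⟨h2, _⟩⟩; rw [h1] at h2; exact Bool.false_ne_true h2.symm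
  set ut := pr P (fun o i l => A o = true ∧ V i = true ∧ U i = true ∧ L l = w) with hut
  set uf := pr P (fun o i l => A o = true ∧ V i = false ∧ U i = true ∧ L l = w) with huf
  have hufn : uf ≤ pr P (fun o i l => A o = true ∧ (U i = true ∧ V i = false)) := by
    refine pr_mono P hnn fun o i l => ?_; tauto
  by_cases hw : μ = 0
  · have h1 : ut ≤ pr P (fun _ i l => V i = true ∧ U i = true ∧ L l = w) :=
      pr_mono P hnn fun o i l => by tauto
    have h2 : pr P (fun _ i l => V i = true ∧ U i = true ∧ L l = w) = 0 := by
      rw [hm true, hw, zero_mul]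
    have hut0 : ut = 0 := le_antisymm (h2 ▸ h1) (pr_nonneg P hnn _)
    rw [hut0, zero_mul]
    exact mul_nonneg (pr_nonneg P hnn _) (le_of_lt (hpos true true))
  · have hμpos : 0 < μ := lt_of_le_of_ne hμ0 (Ne.symm hw)
    have e1 := h0 true true true
    have e2 := h0 true false true
    rw [hD, hm true, hm false] at e1 e2
    set K := pr P (fun o i l => A o = true ∧ U i = true ∧ L l = w)
    set ptt := pr P (fun _ i _ => U i = true ∧ V i = true) with hptt
    set ptf := pr P (fun _ i _ => U i = true ∧ V i = false) with hptf
    have hpt : 0 < ptt := hpos true true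
    have hpf : 0 < ptf := hpos true false
    -- e1 : ut * (μ*ptt + μ*ptf) = K * (μ*ptt), e2 : uf * (μ*ptt + μ*ptf) = K * (μ*ptf)
    have key : ut * ptf = uf * ptt := by
      have h3 : ut * (μ * ptt + μ * ptf) * (μ * ptf) = uf * (μ * ptt + μ * ptf) * (μ * ptt) := by
        rw [e1, e2]; ring
      have h4 : (ut * ptf - uf * ptt) * (μ * (μ * ptt + μ * ptf)) = 0 := by
        linear_combination h3
      have h5 : μ * (μ * ptt + μ * ptf) ≠ 0 := by positivity
      rcases mul_eq_zero.mp h4 with h6 | h6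
      · linarith [sub_eq_zero.mp (by linarith : ut * ptf - uf * ptt = 0)]
      · exact absurd h6 h5
    calc ut * ptf = uf * ptt := key
      _ ≤ pr P (fun o i l => A o = true ∧ (U i = true ∧ V i = false)) * ptt := by
          exact mul_le_mul_of_nonneg_right hufn (le_of_lt hpt)
      _ = _ := rfl

end Party
section Party2

variable (P : Outcome → Inputs → Lams → ℝ)

lemma party (hnn : ∀ o i l, 0 ≤ P o i l)
    (A1 A2 : Outcome → Bool) (X1 X2 : Inputs → Bool) (L : Lams → Bool)
    (h0 : ∀ a1v x2v x1v : Bool,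
      pr P (fun o i l => A1 o = a1v ∧ X2 i = x2v ∧ X1 i = x1v ∧ L l = false)
          * pr P (fun _ i l => X1 i = x1v ∧ L l = false)
        = pr P (fun o i l => A1 o = a1v ∧ X1 i = x1v ∧ L l = false)
          * pr P (fun _ i l => X2 i = x2v ∧ X1 i = x1v ∧ L l = false))
    (h1 : ∀ a2v x1v x2v : Bool,
      pr P (fun o i l => A2 o = a2v ∧ X1 i = x1v ∧ X2 i = x2v ∧ L l = true)
          * pr P (fun _ i l => X2 i = x2v ∧ L l = true)
        = pr P (fun o i l => A2 o = a2v ∧ X2 i = x2v ∧ L l = true)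
          * pr P (fun _ i l => X1 i = x1v ∧ X2 i = x2v ∧ L l = true))
    (hind : ∀ wv u v : Bool,
      pr P (fun _ i l => L l = wv ∧ (X1 i = u ∧ X2 i = v))
        = pr P (fun _ _ l => L l = wv) * pr P (fun _ i _ => X1 i = u ∧ X2 i = v))
    (hpos : ∀ u v : Bool, 0 < pr P (fun _ i _ => X1 i = u ∧ X2 i = v)) :
    pr P (fun o i l => ¬(A1 o = L l) ∧ (X1 i = true ∧ X2 i = true))
      ≤ (pr P (fun o i l => A1 o = true ∧ (X1 i = true ∧ X2 i = false))
            / pr P (fun _ i _ => X1 i = true ∧ X2 i = false)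
          + pr P (fun o i l => A2 o = true ∧ (X1 i = false ∧ X2 i = true))
            / pr P (fun _ i _ => X1 i = false ∧ X2 i = true)
          + pr P (fun o i l => (A1 o = false ∧ A2 o = false) ∧ (X1 i = true ∧ X2 i = true))
            / pr P (fun _ i _ => X1 i = true ∧ X2 i = true))
        * pr P (fun _ i _ => X1 i = true ∧ X2 i = true) := by
  have hsplit : pr P (fun o i l => ¬(A1 o = L l) ∧ (X1 i = true ∧ X2 i = true))
      = pr P (fun o i l => A1 o = true ∧ X2 i = true ∧ X1 i = true ∧ L l = false)
        + pr P (fun o i l => A1 o = false ∧ X1 i = true ∧ X2 i = true ∧ L l = true) := by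
    refine pr_add P (fun o i l => ?_) (fun o i l => ?_)
    · cases hA : A1 o <;> cases hL : L l <;> simp [hA, hL] <;> tauto
    · rintro ⟨⟨h1', _⟩, ⟨h2', _⟩⟩; rw [h1'] at h2'; simp at h2'
  -- first piece : via shift with U := X1, V := X2, w := false
  have claim1 := shift P hnn A1 X1 X2 L false h0
    (fun wv u v => hind wv u v) hpos
  -- second piece
  have claim2 : pr P (fun o i l => A1 o = false ∧ X1 i = true ∧ X2 i = true ∧ L l = true)
      ≤ pr P (fun o i l => (A1 o = false ∧ A2 o = false) ∧ (X1 i = true ∧ X2 i = true))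
        + pr P (fun o i l => A2 o = true ∧ X1 i = true ∧ X2 i = true ∧ L l = true) := by
    refine pr_le_add2 P hnn fun o i l => ?_
    rintro ⟨ha, hx1, hx2, hl⟩
    by_cases hA2 : A2 o = true
    · exact Or.inr ⟨hA2, hx1, hx2, hl⟩
    · simp only [Bool.not_eq_true] at hA2
      exact Or.inl ⟨⟨ha, hA2⟩, hx1, hx2⟩
  -- third piece : shift with U := X2, V := X1, w := true
  have hind' : ∀ wv u v : Bool,
      pr P (fun _ i l => L l = wv ∧ (X2 i = u ∧ X1 i = v))
        = pr P (fun _ _ l => L l = wv) * pr P (fun _ i _ => X2 i = u ∧ X1 i = v) := by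
    intro wv u v
    rw [pr_congr P (F := fun _ i l => L l = wv ∧ (X1 i = v ∧ X2 i = u)) (by tauto),
      hind wv v u]
    congr 1
    exact pr_congr P (by tauto)
  have hpos' : ∀ u v : Bool, 0 < pr P (fun _ i _ => X2 i = u ∧ X1 i = v) := by
    intro u v
    have := hpos v u
    rwa [pr_congr P (F := fun _ i _ => X2 i = u ∧ X1 i = v) (by tauto)] at this
  have claim3 := shift P hnn A2 X2 X1 L true h1 hind' hpos'
  -- translate claim3's events
  have e1 : pr P (fun _ i _ => X2 i = true ∧ X1 i = false)
      = pr P (fun _ i _ => X1 i = false ∧ X2 i = true) := pr_congr P (by tauto)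
  have e2 : pr P (fun o i l => A2 o = true ∧ (X2 i = true ∧ X1 i = false))
      = pr P (fun o i l => A2 o = true ∧ (X1 i = false ∧ X2 i = true)) := pr_congr P (by tauto)
  have e3 : pr P (fun _ i _ => X2 i = true ∧ X1 i = true)
      = pr P (fun _ i _ => X1 i = true ∧ X2 i = true) := pr_congr P (by tauto)
  rw [e1, e2, e3] at claim3
  -- arithmetic
  set ptt := pr P (fun _ i _ => X1 i = true ∧ X2 i = true) with hptt
  set ptf := pr P (fun _ i _ => X1 i = true ∧ X2 i = false) with hptf
  set pft := pr P (fun _ i _ => X1 i = false ∧ X2 i = true) with hpft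
  have hp1 : 0 < ptt := hpos true true
  have hp2 : 0 < ptf := hpos true false
  have hp3 : 0 < pft := hpos false true
  set n1 := pr P (fun o i l => A1 o = true ∧ (X1 i = true ∧ X2 i = false))
  set n2 := pr P (fun o i l => A2 o = true ∧ (X1 i = false ∧ X2 i = true))
  set n3 := pr P (fun o i l => (A1 o = false ∧ A2 o = false) ∧ (X1 i = true ∧ X2 i = true))
  set pr1 := pr P (fun o i l => A1 o = true ∧ X2 i = true ∧ X1 i = true ∧ L l = false)
  set pr2 := pr P (fun o i l => A1 o = false ∧ X1 i = true ∧ X2 i = true ∧ L l = true)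
  set pr3 := pr P (fun o i l => A2 o = true ∧ X1 i = true ∧ X2 i = true ∧ L l = true)
  have b1 : pr1 ≤ n1 / ptf * ptt := by
    rw [div_mul_eq_mul_div, le_div_iff₀ hp2]
    exact claim1
  have b3 : pr3 ≤ n2 / pft * ptt := by
    rw [div_mul_eq_mul_div, le_div_iff₀ hp3]
    exact claim3
  have b4 : n3 / ptt * ptt = n3 := div_mul_cancel₀ n3 (ne_of_gt hp1)
  rw [hsplit]
  have expand : (n1 / ptf + n2 / pft + n3 / ptt) * ptt
      = n1 / ptf * ptt + n2 / pft * ptt + n3 / ptt * ptt := by ring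
  rw [expand, b4]
  linarith

end Party2
/-- **Theorem 2: causal Mermin inequality.** -/
theorem stmt6 (P : Outcome → Inputs → Lams → ℝ)
    -- `P` is a probability distribution
    (hnn : ∀ o i l, 0 ≤ P o i l)
    (hsum : (∑ o : Outcome, ∑ i : Inputs, ∑ l : Lams, P o i l) = 1)
    -- (i) all inputs have positive probability
    (hin : ∀ iv : Inputs, 0 < pr P (fun _ i _ => i = iv))
    -- (ii) definite causal order
    (hA0 : ∀ a1v x2v x1v : Bool,
      pr P (fun o i l => o.a1 = a1v ∧ i.x2 = x2v ∧ i.x1 = x1v ∧ l.lA = false)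
          * pr P (fun _ i l => i.x1 = x1v ∧ l.lA = false)
        = pr P (fun o i l => o.a1 = a1v ∧ i.x1 = x1v ∧ l.lA = false)
          * pr P (fun _ i l => i.x2 = x2v ∧ i.x1 = x1v ∧ l.lA = false))
    (hA1 : ∀ a2v x1v x2v : Bool,
      pr P (fun o i l => o.a2 = a2v ∧ i.x1 = x1v ∧ i.x2 = x2v ∧ l.lA = true)
          * pr P (fun _ i l => i.x2 = x2v ∧ l.lA = true)
        = pr P (fun o i l => o.a2 = a2v ∧ i.x2 = x2v ∧ l.lA = true)
          * pr P (fun _ i l => i.x1 = x1v ∧ i.x2 = x2v ∧ l.lA = true))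
    (hB0 : ∀ b1v y2v y1v : Bool,
      pr P (fun o i l => o.b1 = b1v ∧ i.y2 = y2v ∧ i.y1 = y1v ∧ l.lB = false)
          * pr P (fun _ i l => i.y1 = y1v ∧ l.lB = false)
        = pr P (fun o i l => o.b1 = b1v ∧ i.y1 = y1v ∧ l.lB = false)
          * pr P (fun _ i l => i.y2 = y2v ∧ i.y1 = y1v ∧ l.lB = false))
    (hB1 : ∀ b2v y1v y2v : Bool,
      pr P (fun o i l => o.b2 = b2v ∧ i.y1 = y1v ∧ i.y2 = y2v ∧ l.lB = true)
          * pr P (fun _ i l => i.y2 = y2v ∧ l.lB = true)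
        = pr P (fun o i l => o.b2 = b2v ∧ i.y2 = y2v ∧ l.lB = true)
          * pr P (fun _ i l => i.y1 = y1v ∧ i.y2 = y2v ∧ l.lB = true))
    (hC0 : ∀ c1v z2v z1v : Bool,
      pr P (fun o i l => o.c1 = c1v ∧ i.z2 = z2v ∧ i.z1 = z1v ∧ l.lC = false)
          * pr P (fun _ i l => i.z1 = z1v ∧ l.lC = false)
        = pr P (fun o i l => o.c1 = c1v ∧ i.z1 = z1v ∧ l.lC = false)
          * pr P (fun _ i l => i.z2 = z2v ∧ i.z1 = z1v ∧ l.lC = false))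
    (hC1 : ∀ c2v z1v z2v : Bool,
      pr P (fun o i l => o.c2 = c2v ∧ i.z1 = z1v ∧ i.z2 = z2v ∧ l.lC = true)
          * pr P (fun _ i l => i.z2 = z2v ∧ l.lC = true)
        = pr P (fun o i l => o.c2 = c2v ∧ i.z2 = z2v ∧ l.lC = true)
          * pr P (fun _ i l => i.z1 = z1v ∧ i.z2 = z2v ∧ l.lC = true))
    -- (iii) relativistic causality: `(λ_A,λ_B,λ_C) ⫫ (x⃗,y⃗,z⃗)`
    (hRC0 : ∀ (lv : Lams) (iv : Inputs),
      pr P (fun _ i l => l = lv ∧ i = iv)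
        = pr P (fun _ _ l => l = lv) * pr P (fun _ i _ => i = iv))
    -- `(λ_A, b3, c3) ⫫ x⃗ | (y⃗, z⃗)`
    (hRCx : ∀ lAv b3v c3v x1v x2v y1v y2v z1v z2v : Bool,
      pr P (fun o i l => l.lA = lAv ∧ o.b3 = b3v ∧ o.c3 = c3v ∧
            i.x1 = x1v ∧ i.x2 = x2v ∧ i.y1 = y1v ∧ i.y2 = y2v ∧ i.z1 = z1v ∧ i.z2 = z2v)
          * pr P (fun _ i _ => i.y1 = y1v ∧ i.y2 = y2v ∧ i.z1 = z1v ∧ i.z2 = z2v)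
        = pr P (fun o i l => l.lA = lAv ∧ o.b3 = b3v ∧ o.c3 = c3v ∧
            i.y1 = y1v ∧ i.y2 = y2v ∧ i.z1 = z1v ∧ i.z2 = z2v)
          * pr P (fun _ i _ => i.x1 = x1v ∧ i.x2 = x2v ∧
            i.y1 = y1v ∧ i.y2 = y2v ∧ i.z1 = z1v ∧ i.z2 = z2v))
    -- `(a3, λ_B, c3) ⫫ y⃗ | (x⃗, z⃗)`
    (hRCy : ∀ a3v lBv c3v x1v x2v y1v y2v z1v z2v : Bool,
      pr P (fun o i l => o.a3 = a3v ∧ l.lB = lBv ∧ o.c3 = c3v ∧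
            i.x1 = x1v ∧ i.x2 = x2v ∧ i.y1 = y1v ∧ i.y2 = y2v ∧ i.z1 = z1v ∧ i.z2 = z2v)
          * pr P (fun _ i _ => i.x1 = x1v ∧ i.x2 = x2v ∧ i.z1 = z1v ∧ i.z2 = z2v)
        = pr P (fun o i l => o.a3 = a3v ∧ l.lB = lBv ∧ o.c3 = c3v ∧
            i.x1 = x1v ∧ i.x2 = x2v ∧ i.z1 = z1v ∧ i.z2 = z2v)
          * pr P (fun _ i _ => i.x1 = x1v ∧ i.x2 = x2v ∧
            i.y1 = y1v ∧ i.y2 = y2v ∧ i.z1 = z1v ∧ i.z2 = z2v))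
    -- `(a3, b3, λ_C) ⫫ z⃗ | (x⃗, y⃗)`
    (hRCz : ∀ a3v b3v lCv x1v x2v y1v y2v z1v z2v : Bool,
      pr P (fun o i l => o.a3 = a3v ∧ o.b3 = b3v ∧ l.lC = lCv ∧
            i.x1 = x1v ∧ i.x2 = x2v ∧ i.y1 = y1v ∧ i.y2 = y2v ∧ i.z1 = z1v ∧ i.z2 = z2v)
          * pr P (fun _ i _ => i.x1 = x1v ∧ i.x2 = x2v ∧ i.y1 = y1v ∧ i.y2 = y2v)
        = pr P (fun o i l => o.a3 = a3v ∧ o.b3 = b3v ∧ l.lC = lCv ∧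
            i.x1 = x1v ∧ i.x2 = x2v ∧ i.y1 = y1v ∧ i.y2 = y2v)
          * pr P (fun _ i _ => i.x1 = x1v ∧ i.x2 = x2v ∧
            i.y1 = y1v ∧ i.y2 = y2v ∧ i.z1 = z1v ∧ i.z2 = z2v))
    -- (iv) `(a1, a2, λ_A) ⫫ (y⃗, z⃗) | x⃗`
    (hExA : ∀ a1v a2v lAv x1v x2v y1v y2v z1v z2v : Bool,
      pr P (fun o i l => o.a1 = a1v ∧ o.a2 = a2v ∧ l.lA = lAv ∧
            i.x1 = x1v ∧ i.x2 = x2v ∧ i.y1 = y1v ∧ i.y2 = y2v ∧ i.z1 = z1v ∧ i.z2 = z2v)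
          * pr P (fun _ i _ => i.x1 = x1v ∧ i.x2 = x2v)
        = pr P (fun o i l => o.a1 = a1v ∧ o.a2 = a2v ∧ l.lA = lAv ∧
            i.x1 = x1v ∧ i.x2 = x2v)
          * pr P (fun _ i _ => i.x1 = x1v ∧ i.x2 = x2v ∧
            i.y1 = y1v ∧ i.y2 = y2v ∧ i.z1 = z1v ∧ i.z2 = z2v))
    -- `(b1, b2, λ_B) ⫫ (x⃗, z⃗) | y⃗`
    (hExB : ∀ b1v b2v lBv x1v x2v y1v y2v z1v z2v : Bool,
      pr P (fun o i l => o.b1 = b1v ∧ o.b2 = b2v ∧ l.lB = lBv ∧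
            i.x1 = x1v ∧ i.x2 = x2v ∧ i.y1 = y1v ∧ i.y2 = y2v ∧ i.z1 = z1v ∧ i.z2 = z2v)
          * pr P (fun _ i _ => i.y1 = y1v ∧ i.y2 = y2v)
        = pr P (fun o i l => o.b1 = b1v ∧ o.b2 = b2v ∧ l.lB = lBv ∧
            i.y1 = y1v ∧ i.y2 = y2v)
          * pr P (fun _ i _ => i.x1 = x1v ∧ i.x2 = x2v ∧
            i.y1 = y1v ∧ i.y2 = y2v ∧ i.z1 = z1v ∧ i.z2 = z2v))
    -- `(c1, c2, λ_C) ⫫ (x⃗, y⃗) | z⃗`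
    (hExC : ∀ c1v c2v lCv x1v x2v y1v y2v z1v z2v : Bool,
      pr P (fun o i l => o.c1 = c1v ∧ o.c2 = c2v ∧ l.lC = lCv ∧
            i.x1 = x1v ∧ i.x2 = x2v ∧ i.y1 = y1v ∧ i.y2 = y2v ∧ i.z1 = z1v ∧ i.z2 = z2v)
          * pr P (fun _ i _ => i.z1 = z1v ∧ i.z2 = z2v)
        = pr P (fun o i l => o.c1 = c1v ∧ o.c2 = c2v ∧ l.lC = lCv ∧
            i.z1 = z1v ∧ i.z2 = z2v)
          * pr P (fun _ i _ => i.x1 = x1v ∧ i.x2 = x2v ∧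
            i.y1 = y1v ∧ i.y2 = y2v ∧ i.z1 = z1v ∧ i.z2 = z2v)) :
    -- the causal Mermin inequality
    cpr P (fun o _ _ => Bool.xor o.a1 (Bool.xor o.b1 o.c1) = false)
        (fun _ i _ => i = ⟨true, true, true, true, true, true⟩)
      + cpr P (fun o _ _ => Bool.xor o.a1 (Bool.xor o.b3 o.c3) = true)
        (fun _ i _ => i = ⟨true, true, false, false, false, false⟩)
      + cpr P (fun o _ _ => Bool.xor o.a3 (Bool.xor o.b1 o.c3) = true)
        (fun _ i _ => i = ⟨false, false, true, true, false, false⟩)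
      + cpr P (fun o _ _ => Bool.xor o.a3 (Bool.xor o.b3 o.c1) = true)
        (fun _ i _ => i = ⟨false, false, false, false, true, true⟩)
      - 2 * (cpr P (fun o _ _ => o.a1 = true) (fun _ i _ => i.x1 = true ∧ i.x2 = false)
        + cpr P (fun o _ _ => o.a2 = true) (fun _ i _ => i.x1 = false ∧ i.x2 = true)
        + cpr P (fun o _ _ => o.a1 = false ∧ o.a2 = false)
            (fun _ i _ => i.x1 = true ∧ i.x2 = true)
        + cpr P (fun o _ _ => o.b1 = true) (fun _ i _ => i.y1 = true ∧ i.y2 = false)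
        + cpr P (fun o _ _ => o.b2 = true) (fun _ i _ => i.y1 = false ∧ i.y2 = true)
        + cpr P (fun o _ _ => o.b1 = false ∧ o.b2 = false)
            (fun _ i _ => i.y1 = true ∧ i.y2 = true)
        + cpr P (fun o _ _ => o.c1 = true) (fun _ i _ => i.z1 = true ∧ i.z2 = false)
        + cpr P (fun o _ _ => o.c2 = true) (fun _ i _ => i.z1 = false ∧ i.z2 = true)
        + cpr P (fun o _ _ => o.c1 = false ∧ o.c2 = false)
            (fun _ i _ => i.z1 = true ∧ i.z2 = true)) ≤ 3 := by
  simp only [cpr]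
  set s1 : Inputs := ⟨true, true, true, true, true, true⟩ with hs1
  set s2 : Inputs := ⟨true, true, false, false, false, false⟩ with hs2
  set s3 : Inputs := ⟨false, false, true, true, false, false⟩ with hs3
  set s4 : Inputs := ⟨false, false, false, false, true, true⟩ with hs4
  set s0 : Inputs := (⟨false, false, false, false, false, false⟩ : Inputs) with hs0
  -- positivity of marginals
  have hπx : ∀ u v : Bool, 0 < pr P (fun _ i _ => i.x1 = u ∧ i.x2 = v) := by
    intro u v
    have h := hin ⟨u, v, false, false, false, false⟩
    have hm : pr P (fun _ i _ => i = (⟨u, v, false, false, false, false⟩ : Inputs))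
        ≤ pr P (fun _ i _ => i.x1 = u ∧ i.x2 = v) := by
      refine pr_mono P hnn fun o i l hi => ?_
      rw [hi]; exact ⟨rfl, rfl⟩
    linarith
  have hπy : ∀ u v : Bool, 0 < pr P (fun _ i _ => i.y1 = u ∧ i.y2 = v) := by
    intro u v
    have h := hin ⟨false, false, u, v, false, false⟩
    have hm : pr P (fun _ i _ => i = (⟨false, false, u, v, false, false⟩ : Inputs))
        ≤ pr P (fun _ i _ => i.y1 = u ∧ i.y2 = v) := by
      refine pr_mono P hnn fun o i l hi => ?_
      rw [hi]; exact ⟨rfl, rfl⟩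
    linarith
  have hπz : ∀ u v : Bool, 0 < pr P (fun _ i _ => i.z1 = u ∧ i.z2 = v) := by
    intro u v
    have h := hin ⟨false, false, false, false, u, v⟩
    have hm : pr P (fun _ i _ => i = (⟨false, false, false, false, u, v⟩ : Inputs))
        ≤ pr P (fun _ i _ => i.z1 = u ∧ i.z2 = v) := by
      refine pr_mono P hnn fun o i l hi => ?_
      rw [hi]; exact ⟨rfl, rfl⟩
    linarith
  have hCyz : 0 < pr P (fun _ i _ => i.y1 = false ∧ i.y2 = false ∧ i.z1 = false ∧ i.z2 = false) := by
    have h := hin s0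
    have hm : pr P (fun _ i _ => i = s0)
        ≤ pr P (fun _ i _ => i.y1 = false ∧ i.y2 = false ∧ i.z1 = false ∧ i.z2 = false) := by
      refine pr_mono P hnn fun o i l hi => ?_
      rw [hi, hs0]; exact ⟨rfl, rfl, rfl, rfl⟩
    linarith
  have hCxz : 0 < pr P (fun _ i _ => i.x1 = false ∧ i.x2 = false ∧ i.z1 = false ∧ i.z2 = false) := by
    have h := hin s0
    have hm : pr P (fun _ i _ => i = s0)
        ≤ pr P (fun _ i _ => i.x1 = false ∧ i.x2 = false ∧ i.z1 = false ∧ i.z2 = false) := by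
      refine pr_mono P hnn fun o i l hi => ?_
      rw [hi, hs0]; exact ⟨rfl, rfl, rfl, rfl⟩
    linarith
  have hCxy : 0 < pr P (fun _ i _ => i.x1 = false ∧ i.x2 = false ∧ i.y1 = false ∧ i.y2 = false) := by
    have h := hin s0
    have hm : pr P (fun _ i _ => i = s0)
        ≤ pr P (fun _ i _ => i.x1 = false ∧ i.x2 = false ∧ i.y1 = false ∧ i.y2 = false) := by
      refine pr_mono P hnn fun o i l hi => ?_
      rw [hi, hs0]; exact ⟨rfl, rfl, rfl, rfl⟩
    linarith
  -- independence of the λ's from the inputs, lifted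
  have hindA : ∀ wv u v : Bool,
      pr P (fun _ i l => l.lA = wv ∧ (i.x1 = u ∧ i.x2 = v))
        = pr P (fun _ _ l => l.lA = wv) * pr P (fun _ i _ => i.x1 = u ∧ i.x2 = v) :=
    fun wv u v => indep_lift P hRC0 (fun l => l.lA = wv) (fun i => i.x1 = u ∧ i.x2 = v)
  have hindB : ∀ wv u v : Bool,
      pr P (fun _ i l => l.lB = wv ∧ (i.y1 = u ∧ i.y2 = v))
        = pr P (fun _ _ l => l.lB = wv) * pr P (fun _ i _ => i.y1 = u ∧ i.y2 = v) :=
    fun wv u v => indep_lift P hRC0 (fun l => l.lB = wv) (fun i => i.y1 = u ∧ i.y2 = v)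
  have hindC : ∀ wv u v : Bool,
      pr P (fun _ i l => l.lC = wv ∧ (i.z1 = u ∧ i.z2 = v))
        = pr P (fun _ _ l => l.lC = wv) * pr P (fun _ i _ => i.z1 = u ∧ i.z2 = v) :=
    fun wv u v => indep_lift P hRC0 (fun l => l.lC = wv) (fun i => i.z1 = u ∧ i.z2 = v)
  -- per-party mismatch bounds
  have hpartyA := party P hnn (fun o => o.a1) (fun o => o.a2) (fun i => i.x1) (fun i => i.x2)
    (fun l => l.lA) hA0 hA1 hindA hπx
  have hpartyB := party P hnn (fun o => o.b1) (fun o => o.b2) (fun i => i.y1) (fun i => i.y2)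
    (fun l => l.lB) hB0 hB1 hindB hπy
  have hpartyC := party P hnn (fun o => o.c1) (fun o => o.c2) (fun i => i.z1) (fun i => i.z2)
    (fun l => l.lC) hC0 hC1 hindC hπz
  -- lifted conditional independence (iv), party A
  have hptA : ∀ (a : Bool × Bool × Bool) (b : Bool × Bool × Bool × Bool),
      pr P (fun o i l => (o.a1, o.a2, l.lA) = a ∧ (i.y1, i.y2, i.z1, i.z2) = b ∧ (i.x1 = true ∧ i.x2 = true))
        * pr P (fun _ i _ => i.x1 = true ∧ i.x2 = true)
      = pr P (fun o i l => (o.a1, o.a2, l.lA) = a ∧ (i.x1 = true ∧ i.x2 = true))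
        * pr P (fun _ i _ => (i.y1, i.y2, i.z1, i.z2) = b ∧ (i.x1 = true ∧ i.x2 = true)) := by
    rintro ⟨a1v, a2v, lAv⟩ ⟨y1v, y2v, z1v, z2v⟩
    have e1 : pr P (fun o i l => (o.a1, o.a2, l.lA) = (a1v, a2v, lAv) ∧ (i.y1, i.y2, i.z1, i.z2) = (y1v, y2v, z1v, z2v) ∧ (i.x1 = true ∧ i.x2 = true))
        = pr P (fun o i l => o.a1 = a1v ∧ o.a2 = a2v ∧ l.lA = lAv ∧ i.x1 = true ∧ i.x2 = true ∧ i.y1 = y1v ∧ i.y2 = y2v ∧ i.z1 = z1v ∧ i.z2 = z2v) :=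
      pr_congr P (by intro o i l; simp only [Prod.mk.injEq]; tauto)
    have e2 : pr P (fun o i l => (o.a1, o.a2, l.lA) = (a1v, a2v, lAv) ∧ (i.x1 = true ∧ i.x2 = true))
        = pr P (fun o i l => o.a1 = a1v ∧ o.a2 = a2v ∧ l.lA = lAv ∧ i.x1 = true ∧ i.x2 = true) :=
      pr_congr P (by intro o i l; simp only [Prod.mk.injEq]; tauto)
    have e3 : pr P (fun _ i _ => (i.y1, i.y2, i.z1, i.z2) = (y1v, y2v, z1v, z2v) ∧ (i.x1 = true ∧ i.x2 = true))
        = pr P (fun _ i _ => i.x1 = true ∧ i.x2 = true ∧ i.y1 = y1v ∧ i.y2 = y2v ∧ i.z1 = z1v ∧ i.z2 = z2v) :=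
      pr_congr P (by intro o i l; simp only [Prod.mk.injEq]; tauto)
    rw [e1, e2, e3]
    exact hExA a1v a2v lAv true true y1v y2v z1v z2v
  have ciA := ci_lift P (fun o l => (o.a1, o.a2, l.lA)) (fun i => (i.y1, i.y2, i.z1, i.z2))
    (fun i => i.x1 = true ∧ i.x2 = true) hptA
  -- party B
  have hptB : ∀ (a : Bool × Bool × Bool) (b : Bool × Bool × Bool × Bool),
      pr P (fun o i l => (o.b1, o.b2, l.lB) = a ∧ (i.x1, i.x2, i.z1, i.z2) = b ∧ (i.y1 = true ∧ i.y2 = true))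
        * pr P (fun _ i _ => i.y1 = true ∧ i.y2 = true)
      = pr P (fun o i l => (o.b1, o.b2, l.lB) = a ∧ (i.y1 = true ∧ i.y2 = true))
        * pr P (fun _ i _ => (i.x1, i.x2, i.z1, i.z2) = b ∧ (i.y1 = true ∧ i.y2 = true)) := by
    rintro ⟨b1v, b2v, lBv⟩ ⟨x1v, x2v, z1v, z2v⟩
    have e1 : pr P (fun o i l => (o.b1, o.b2, l.lB) = (b1v, b2v, lBv) ∧ (i.x1, i.x2, i.z1, i.z2) = (x1v, x2v, z1v, z2v) ∧ (i.y1 = true ∧ i.y2 = true))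
        = pr P (fun o i l => o.b1 = b1v ∧ o.b2 = b2v ∧ l.lB = lBv ∧ i.x1 = x1v ∧ i.x2 = x2v ∧ i.y1 = true ∧ i.y2 = true ∧ i.z1 = z1v ∧ i.z2 = z2v) :=
      pr_congr P (by intro o i l; simp only [Prod.mk.injEq]; tauto)
    have e2 : pr P (fun o i l => (o.b1, o.b2, l.lB) = (b1v, b2v, lBv) ∧ (i.y1 = true ∧ i.y2 = true))
        = pr P (fun o i l => o.b1 = b1v ∧ o.b2 = b2v ∧ l.lB = lBv ∧ i.y1 = true ∧ i.y2 = true) :=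
      pr_congr P (by intro o i l; simp only [Prod.mk.injEq]; tauto)
    have e3 : pr P (fun _ i _ => (i.x1, i.x2, i.z1, i.z2) = (x1v, x2v, z1v, z2v) ∧ (i.y1 = true ∧ i.y2 = true))
        = pr P (fun _ i _ => i.x1 = x1v ∧ i.x2 = x2v ∧ i.y1 = true ∧ i.y2 = true ∧ i.z1 = z1v ∧ i.z2 = z2v) :=
      pr_congr P (by intro o i l; simp only [Prod.mk.injEq]; tauto)
    rw [e1, e2, e3]
    exact hExB b1v b2v lBv x1v x2v true true z1v z2v
  have ciB := ci_lift P (fun o l => (o.b1, o.b2, l.lB)) (fun i => (i.x1, i.x2, i.z1, i.z2))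
    (fun i => i.y1 = true ∧ i.y2 = true) hptB
  -- party C
  have hptC : ∀ (a : Bool × Bool × Bool) (b : Bool × Bool × Bool × Bool),
      pr P (fun o i l => (o.c1, o.c2, l.lC) = a ∧ (i.x1, i.x2, i.y1, i.y2) = b ∧ (i.z1 = true ∧ i.z2 = true))
        * pr P (fun _ i _ => i.z1 = true ∧ i.z2 = true)
      = pr P (fun o i l => (o.c1, o.c2, l.lC) = a ∧ (i.z1 = true ∧ i.z2 = true))
        * pr P (fun _ i _ => (i.x1, i.x2, i.y1, i.y2) = b ∧ (i.z1 = true ∧ i.z2 = true)) := by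
    rintro ⟨c1v, c2v, lCv⟩ ⟨x1v, x2v, y1v, y2v⟩
    have e1 : pr P (fun o i l => (o.c1, o.c2, l.lC) = (c1v, c2v, lCv) ∧ (i.x1, i.x2, i.y1, i.y2) = (x1v, x2v, y1v, y2v) ∧ (i.z1 = true ∧ i.z2 = true))
        = pr P (fun o i l => o.c1 = c1v ∧ o.c2 = c2v ∧ l.lC = lCv ∧ i.x1 = x1v ∧ i.x2 = x2v ∧ i.y1 = y1v ∧ i.y2 = y2v ∧ i.z1 = true ∧ i.z2 = true) :=
      pr_congr P (by intro o i l; simp only [Prod.mk.injEq]; tauto)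
    have e2 : pr P (fun o i l => (o.c1, o.c2, l.lC) = (c1v, c2v, lCv) ∧ (i.z1 = true ∧ i.z2 = true))
        = pr P (fun o i l => o.c1 = c1v ∧ o.c2 = c2v ∧ l.lC = lCv ∧ i.z1 = true ∧ i.z2 = true) :=
      pr_congr P (by intro o i l; simp only [Prod.mk.injEq]; tauto)
    have e3 : pr P (fun _ i _ => (i.x1, i.x2, i.y1, i.y2) = (x1v, x2v, y1v, y2v) ∧ (i.z1 = true ∧ i.z2 = true))
        = pr P (fun _ i _ => i.x1 = x1v ∧ i.x2 = x2v ∧ i.y1 = y1v ∧ i.y2 = y2v ∧ i.z1 = true ∧ i.z2 = true) :=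
      pr_congr P (by intro o i l; simp only [Prod.mk.injEq]; tauto)
    rw [e1, e2, e3]
    exact hExC c1v c2v lCv x1v x2v y1v y2v true true
  have ciC := ci_lift P (fun o l => (o.c1, o.c2, l.lC)) (fun i => (i.x1, i.x2, i.y1, i.y2))
    (fun i => i.z1 = true ∧ i.z2 = true) hptC
  -- mismatch transfers
  have trA1 : pr P (fun o i l => ¬(o.a1 = l.lA) ∧ i = s1) * pr P (fun _ i _ => i.x1 = true ∧ i.x2 = true)
      = pr P (fun o i l => ¬(o.a1 = l.lA) ∧ (i.x1 = true ∧ i.x2 = true)) * pr P (fun _ i _ => i = s1) := by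
    have h' : pr P (fun o i l => ¬(o.a1 = l.lA) ∧ (i.y1, i.y2, i.z1, i.z2) = (true, true, true, true) ∧ (i.x1 = true ∧ i.x2 = true)) * pr P (fun _ i _ => i.x1 = true ∧ i.x2 = true)
        = pr P (fun o i l => ¬(o.a1 = l.lA) ∧ (i.x1 = true ∧ i.x2 = true)) * pr P (fun _ i _ => (i.y1, i.y2, i.z1, i.z2) = (true, true, true, true) ∧ (i.x1 = true ∧ i.x2 = true)) :=
      ciA (fun a => ¬(a.1 = a.2.2)) (fun b => b = (true, true, true, true))
    have e4 : pr P (fun o i l => ¬(o.a1 = l.lA) ∧ (i.y1, i.y2, i.z1, i.z2) = (true, true, true, true) ∧ (i.x1 = true ∧ i.x2 = true))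
        = pr P (fun o i l => ¬(o.a1 = l.lA) ∧ i = s1) :=
      pr_congr P (by
        intro o i l
        rw [hs1]
        obtain ⟨j1, j2, j3, j4, j5, j6⟩ := i
        simp only [Prod.mk.injEq, Inputs.mk.injEq]
        tauto)
    have e5 : pr P (fun _ i _ => (i.y1, i.y2, i.z1, i.z2) = (true, true, true, true) ∧ (i.x1 = true ∧ i.x2 = true))
        = pr P (fun _ i _ => i = s1) :=
      pr_congr P (by
        intro o i l
        rw [hs1]
        obtain ⟨j1, j2, j3, j4, j5, j6⟩ := i
        simp only [Prod.mk.injEq, Inputs.mk.injEq]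
        tauto)
    rw [e4, e5] at h'
    exact h'
  have trA2 : pr P (fun o i l => ¬(o.a1 = l.lA) ∧ i = s2) * pr P (fun _ i _ => i.x1 = true ∧ i.x2 = true)
      = pr P (fun o i l => ¬(o.a1 = l.lA) ∧ (i.x1 = true ∧ i.x2 = true)) * pr P (fun _ i _ => i = s2) := by
    have h' : pr P (fun o i l => ¬(o.a1 = l.lA) ∧ (i.y1, i.y2, i.z1, i.z2) = (false, false, false, false) ∧ (i.x1 = true ∧ i.x2 = true)) * pr P (fun _ i _ => i.x1 = true ∧ i.x2 = true)
        = pr P (fun o i l => ¬(o.a1 = l.lA) ∧ (i.x1 = true ∧ i.x2 = true)) * pr P (fun _ i _ => (i.y1, i.y2, i.z1, i.z2) = (false, false, false, false) ∧ (i.x1 = true ∧ i.x2 = true)) :=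
      ciA (fun a => ¬(a.1 = a.2.2)) (fun b => b = (false, false, false, false))
    have e4 : pr P (fun o i l => ¬(o.a1 = l.lA) ∧ (i.y1, i.y2, i.z1, i.z2) = (false, false, false, false) ∧ (i.x1 = true ∧ i.x2 = true))
        = pr P (fun o i l => ¬(o.a1 = l.lA) ∧ i = s2) :=
      pr_congr P (by
        intro o i l
        rw [hs2]
        obtain ⟨j1, j2, j3, j4, j5, j6⟩ := i
        simp only [Prod.mk.injEq, Inputs.mk.injEq]
        tauto)
    have e5 : pr P (fun _ i _ => (i.y1, i.y2, i.z1, i.z2) = (false, false, false, false) ∧ (i.x1 = true ∧ i.x2 = true))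
        = pr P (fun _ i _ => i = s2) :=
      pr_congr P (by
        intro o i l
        rw [hs2]
        obtain ⟨j1, j2, j3, j4, j5, j6⟩ := i
        simp only [Prod.mk.injEq, Inputs.mk.injEq]
        tauto)
    rw [e4, e5] at h'
    exact h'
  have trB1 : pr P (fun o i l => ¬(o.b1 = l.lB) ∧ i = s1) * pr P (fun _ i _ => i.y1 = true ∧ i.y2 = true)
      = pr P (fun o i l => ¬(o.b1 = l.lB) ∧ (i.y1 = true ∧ i.y2 = true)) * pr P (fun _ i _ => i = s1) := by
    have h' : pr P (fun o i l => ¬(o.b1 = l.lB) ∧ (i.x1, i.x2, i.z1, i.z2) = (true, true, true, true) ∧ (i.y1 = true ∧ i.y2 = true)) * pr P (fun _ i _ => i.y1 = true ∧ i.y2 = true)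
        = pr P (fun o i l => ¬(o.b1 = l.lB) ∧ (i.y1 = true ∧ i.y2 = true)) * pr P (fun _ i _ => (i.x1, i.x2, i.z1, i.z2) = (true, true, true, true) ∧ (i.y1 = true ∧ i.y2 = true)) :=
      ciB (fun a => ¬(a.1 = a.2.2)) (fun b => b = (true, true, true, true))
    have e4 : pr P (fun o i l => ¬(o.b1 = l.lB) ∧ (i.x1, i.x2, i.z1, i.z2) = (true, true, true, true) ∧ (i.y1 = true ∧ i.y2 = true))
        = pr P (fun o i l => ¬(o.b1 = l.lB) ∧ i = s1) :=
      pr_congr P (by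
        intro o i l
        rw [hs1]
        obtain ⟨j1, j2, j3, j4, j5, j6⟩ := i
        simp only [Prod.mk.injEq, Inputs.mk.injEq]
        tauto)
    have e5 : pr P (fun _ i _ => (i.x1, i.x2, i.z1, i.z2) = (true, true, true, true) ∧ (i.y1 = true ∧ i.y2 = true))
        = pr P (fun _ i _ => i = s1) :=
      pr_congr P (by
        intro o i l
        rw [hs1]
        obtain ⟨j1, j2, j3, j4, j5, j6⟩ := i
        simp only [Prod.mk.injEq, Inputs.mk.injEq]
        tauto)
    rw [e4, e5] at h'
    exact h'
  have trB3 : pr P (fun o i l => ¬(o.b1 = l.lB) ∧ i = s3) * pr P (fun _ i _ => i.y1 = true ∧ i.y2 = true)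
      = pr P (fun o i l => ¬(o.b1 = l.lB) ∧ (i.y1 = true ∧ i.y2 = true)) * pr P (fun _ i _ => i = s3) := by
    have h' : pr P (fun o i l => ¬(o.b1 = l.lB) ∧ (i.x1, i.x2, i.z1, i.z2) = (false, false, false, false) ∧ (i.y1 = true ∧ i.y2 = true)) * pr P (fun _ i _ => i.y1 = true ∧ i.y2 = true)
        = pr P (fun o i l => ¬(o.b1 = l.lB) ∧ (i.y1 = true ∧ i.y2 = true)) * pr P (fun _ i _ => (i.x1, i.x2, i.z1, i.z2) = (false, false, false, false) ∧ (i.y1 = true ∧ i.y2 = true)) :=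
      ciB (fun a => ¬(a.1 = a.2.2)) (fun b => b = (false, false, false, false))
    have e4 : pr P (fun o i l => ¬(o.b1 = l.lB) ∧ (i.x1, i.x2, i.z1, i.z2) = (false, false, false, false) ∧ (i.y1 = true ∧ i.y2 = true))
        = pr P (fun o i l => ¬(o.b1 = l.lB) ∧ i = s3) :=
      pr_congr P (by
        intro o i l
        rw [hs3]
        obtain ⟨j1, j2, j3, j4, j5, j6⟩ := i
        simp only [Prod.mk.injEq, Inputs.mk.injEq]
        tauto)
    have e5 : pr P (fun _ i _ => (i.x1, i.x2, i.z1, i.z2) = (false, false, false, false) ∧ (i.y1 = true ∧ i.y2 = true))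
        = pr P (fun _ i _ => i = s3) :=
      pr_congr P (by
        intro o i l
        rw [hs3]
        obtain ⟨j1, j2, j3, j4, j5, j6⟩ := i
        simp only [Prod.mk.injEq, Inputs.mk.injEq]
        tauto)
    rw [e4, e5] at h'
    exact h'
  have trC1 : pr P (fun o i l => ¬(o.c1 = l.lC) ∧ i = s1) * pr P (fun _ i _ => i.z1 = true ∧ i.z2 = true)
      = pr P (fun o i l => ¬(o.c1 = l.lC) ∧ (i.z1 = true ∧ i.z2 = true)) * pr P (fun _ i _ => i = s1) := by
    have h' : pr P (fun o i l => ¬(o.c1 = l.lC) ∧ (i.x1, i.x2, i.y1, i.y2) = (true, true, true, true) ∧ (i.z1 = true ∧ i.z2 = true)) * pr P (fun _ i _ => i.z1 = true ∧ i.z2 = true)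
        = pr P (fun o i l => ¬(o.c1 = l.lC) ∧ (i.z1 = true ∧ i.z2 = true)) * pr P (fun _ i _ => (i.x1, i.x2, i.y1, i.y2) = (true, true, true, true) ∧ (i.z1 = true ∧ i.z2 = true)) :=
      ciC (fun a => ¬(a.1 = a.2.2)) (fun b => b = (true, true, true, true))
    have e4 : pr P (fun o i l => ¬(o.c1 = l.lC) ∧ (i.x1, i.x2, i.y1, i.y2) = (true, true, true, true) ∧ (i.z1 = true ∧ i.z2 = true))
        = pr P (fun o i l => ¬(o.c1 = l.lC) ∧ i = s1) :=
      pr_congr P (by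
        intro o i l
        rw [hs1]
        obtain ⟨j1, j2, j3, j4, j5, j6⟩ := i
        simp only [Prod.mk.injEq, Inputs.mk.injEq]
        tauto)
    have e5 : pr P (fun _ i _ => (i.x1, i.x2, i.y1, i.y2) = (true, true, true, true) ∧ (i.z1 = true ∧ i.z2 = true))
        = pr P (fun _ i _ => i = s1) :=
      pr_congr P (by
        intro o i l
        rw [hs1]
        obtain ⟨j1, j2, j3, j4, j5, j6⟩ := i
        simp only [Prod.mk.injEq, Inputs.mk.injEq]
        tauto)
    rw [e4, e5] at h'
    exact h'
  have trC4 : pr P (fun o i l => ¬(o.c1 = l.lC) ∧ i = s4) * pr P (fun _ i _ => i.z1 = true ∧ i.z2 = true)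
      = pr P (fun o i l => ¬(o.c1 = l.lC) ∧ (i.z1 = true ∧ i.z2 = true)) * pr P (fun _ i _ => i = s4) := by
    have h' : pr P (fun o i l => ¬(o.c1 = l.lC) ∧ (i.x1, i.x2, i.y1, i.y2) = (false, false, false, false) ∧ (i.z1 = true ∧ i.z2 = true)) * pr P (fun _ i _ => i.z1 = true ∧ i.z2 = true)
        = pr P (fun o i l => ¬(o.c1 = l.lC) ∧ (i.z1 = true ∧ i.z2 = true)) * pr P (fun _ i _ => (i.x1, i.x2, i.y1, i.y2) = (false, false, false, false) ∧ (i.z1 = true ∧ i.z2 = true)) :=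
      ciC (fun a => ¬(a.1 = a.2.2)) (fun b => b = (false, false, false, false))
    have e4 : pr P (fun o i l => ¬(o.c1 = l.lC) ∧ (i.x1, i.x2, i.y1, i.y2) = (false, false, false, false) ∧ (i.z1 = true ∧ i.z2 = true))
        = pr P (fun o i l => ¬(o.c1 = l.lC) ∧ i = s4) :=
      pr_congr P (by
        intro o i l
        rw [hs4]
        obtain ⟨j1, j2, j3, j4, j5, j6⟩ := i
        simp only [Prod.mk.injEq, Inputs.mk.injEq]
        tauto)
    have e5 : pr P (fun _ i _ => (i.x1, i.x2, i.y1, i.y2) = (false, false, false, false) ∧ (i.z1 = true ∧ i.z2 = true))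
        = pr P (fun _ i _ => i = s4) :=
      pr_congr P (by
        intro o i l
        rw [hs4]
        obtain ⟨j1, j2, j3, j4, j5, j6⟩ := i
        simp only [Prod.mk.injEq, Inputs.mk.injEq]
        tauto)
    rw [e4, e5] at h'
    exact h'
  -- parity-event transfers
  have hlam : ∀ sv : Inputs, pr P (fun _ i l => Bool.xor l.lA (Bool.xor l.lB l.lC) = false ∧ i = sv)
      = pr P (fun _ _ l => Bool.xor l.lA (Bool.xor l.lB l.lC) = false) * pr P (fun _ i _ => i = sv) :=
    fun sv => indep_lift P hRC0 (fun l => Bool.xor l.lA (Bool.xor l.lB l.lC) = false) (fun i => i = sv)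
  have trF1 : pr P (fun _ i l => Bool.xor l.lA (Bool.xor l.lB l.lC) = false ∧ i = s1)
        * pr P (fun _ i _ => i = s0)
      = pr P (fun _ i l => Bool.xor l.lA (Bool.xor l.lB l.lC) = false ∧ i = s0)
        * pr P (fun _ i _ => i = s1) := by
    rw [hlam s1, hlam s0]; ring
  have hptRx : ∀ (a : Bool × Bool × Bool) (b : Bool × Bool),
      pr P (fun o i l => (l.lA, o.b3, o.c3) = a ∧ (i.x1, i.x2) = b ∧ (i.y1 = false ∧ i.y2 = false ∧ i.z1 = false ∧ i.z2 = false))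
        * pr P (fun _ i _ => i.y1 = false ∧ i.y2 = false ∧ i.z1 = false ∧ i.z2 = false)
      = pr P (fun o i l => (l.lA, o.b3, o.c3) = a ∧ (i.y1 = false ∧ i.y2 = false ∧ i.z1 = false ∧ i.z2 = false))
        * pr P (fun _ i _ => (i.x1, i.x2) = b ∧ (i.y1 = false ∧ i.y2 = false ∧ i.z1 = false ∧ i.z2 = false)) := by
    rintro ⟨w1, w2, w3⟩ ⟨u1, u2⟩
    have e1 : pr P (fun o i l => (l.lA, o.b3, o.c3) = (w1, w2, w3) ∧ (i.x1, i.x2) = (u1, u2) ∧ (i.y1 = false ∧ i.y2 = false ∧ i.z1 = false ∧ i.z2 = false))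
        = pr P (fun o i l => l.lA = w1 ∧ o.b3 = w2 ∧ o.c3 = w3 ∧ i.x1 = u1 ∧ i.x2 = u2 ∧ i.y1 = false ∧ i.y2 = false ∧ i.z1 = false ∧ i.z2 = false) :=
      pr_congr P (by intro o i l; simp only [Prod.mk.injEq]; tauto)
    have e2 : pr P (fun o i l => (l.lA, o.b3, o.c3) = (w1, w2, w3) ∧ (i.y1 = false ∧ i.y2 = false ∧ i.z1 = false ∧ i.z2 = false))
        = pr P (fun o i l => l.lA = w1 ∧ o.b3 = w2 ∧ o.c3 = w3 ∧ i.y1 = false ∧ i.y2 = false ∧ i.z1 = false ∧ i.z2 = false) :=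
      pr_congr P (by intro o i l; simp only [Prod.mk.injEq]; tauto)
    have e3 : pr P (fun _ i _ => (i.x1, i.x2) = (u1, u2) ∧ (i.y1 = false ∧ i.y2 = false ∧ i.z1 = false ∧ i.z2 = false))
        = pr P (fun _ i _ => i.x1 = u1 ∧ i.x2 = u2 ∧ i.y1 = false ∧ i.y2 = false ∧ i.z1 = false ∧ i.z2 = false) :=
      pr_congr P (by intro o i l; simp only [Prod.mk.injEq]; tauto)
    rw [e1, e2, e3]
    exact hRCx w1 w2 w3 u1 u2 false false false false
  have ciRx := ci_lift P (fun o l => (l.lA, o.b3, o.c3)) (fun i => (i.x1, i.x2))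
    (fun i => i.y1 = false ∧ i.y2 = false ∧ i.z1 = false ∧ i.z2 = false) hptRx
  have ERxa : pr P (fun o i l => Bool.xor l.lA (Bool.xor o.b3 o.c3) = true ∧ i = s2) * pr P (fun _ i _ => i.y1 = false ∧ i.y2 = false ∧ i.z1 = false ∧ i.z2 = false)
      = pr P (fun o i l => Bool.xor l.lA (Bool.xor o.b3 o.c3) = true ∧ (i.y1 = false ∧ i.y2 = false ∧ i.z1 = false ∧ i.z2 = false)) * pr P (fun _ i _ => i = s2) := by
    have h' : pr P (fun o i l => Bool.xor l.lA (Bool.xor o.b3 o.c3) = true ∧ (i.x1, i.x2) = (true, true) ∧ (i.y1 = false ∧ i.y2 = false ∧ i.z1 = false ∧ i.z2 = false)) * pr P (fun _ i _ => i.y1 = false ∧ i.y2 = false ∧ i.z1 = false ∧ i.z2 = false)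
        = pr P (fun o i l => Bool.xor l.lA (Bool.xor o.b3 o.c3) = true ∧ (i.y1 = false ∧ i.y2 = false ∧ i.z1 = false ∧ i.z2 = false)) * pr P (fun _ i _ => (i.x1, i.x2) = (true, true) ∧ (i.y1 = false ∧ i.y2 = false ∧ i.z1 = false ∧ i.z2 = false)) :=
      ciRx (fun a => Bool.xor a.1 (Bool.xor a.2.1 a.2.2) = true) (fun b => b = (true, true))
    have e4 : pr P (fun o i l => Bool.xor l.lA (Bool.xor o.b3 o.c3) = true ∧ (i.x1, i.x2) = (true, true) ∧ (i.y1 = false ∧ i.y2 = false ∧ i.z1 = false ∧ i.z2 = false))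
        = pr P (fun o i l => Bool.xor l.lA (Bool.xor o.b3 o.c3) = true ∧ i = s2) :=
      pr_congr P (by
        intro o i l
        rw [hs2]
        obtain ⟨j1, j2, j3, j4, j5, j6⟩ := i
        simp only [Prod.mk.injEq, Inputs.mk.injEq]
        tauto)
    have e5 : pr P (fun _ i _ => (i.x1, i.x2) = (true, true) ∧ (i.y1 = false ∧ i.y2 = false ∧ i.z1 = false ∧ i.z2 = false))
        = pr P (fun _ i _ => i = s2) :=
      pr_congr P (by
        intro o i l
        rw [hs2]
        obtain ⟨j1, j2, j3, j4, j5, j6⟩ := i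
        simp only [Prod.mk.injEq, Inputs.mk.injEq]
        tauto)
    rw [e4, e5] at h'
    exact h'
  have ERxb : pr P (fun o i l => Bool.xor l.lA (Bool.xor o.b3 o.c3) = true ∧ i = s0) * pr P (fun _ i _ => i.y1 = false ∧ i.y2 = false ∧ i.z1 = false ∧ i.z2 = false)
      = pr P (fun o i l => Bool.xor l.lA (Bool.xor o.b3 o.c3) = true ∧ (i.y1 = false ∧ i.y2 = false ∧ i.z1 = false ∧ i.z2 = false)) * pr P (fun _ i _ => i = s0) := by
    have h' : pr P (fun o i l => Bool.xor l.lA (Bool.xor o.b3 o.c3) = true ∧ (i.x1, i.x2) = (false, false) ∧ (i.y1 = false ∧ i.y2 = false ∧ i.z1 = false ∧ i.z2 = false)) * pr P (fun _ i _ => i.y1 = false ∧ i.y2 = false ∧ i.z1 = false ∧ i.z2 = false)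
        = pr P (fun o i l => Bool.xor l.lA (Bool.xor o.b3 o.c3) = true ∧ (i.y1 = false ∧ i.y2 = false ∧ i.z1 = false ∧ i.z2 = false)) * pr P (fun _ i _ => (i.x1, i.x2) = (false, false) ∧ (i.y1 = false ∧ i.y2 = false ∧ i.z1 = false ∧ i.z2 = false)) :=
      ciRx (fun a => Bool.xor a.1 (Bool.xor a.2.1 a.2.2) = true) (fun b => b = (false, false))
    have e4 : pr P (fun o i l => Bool.xor l.lA (Bool.xor o.b3 o.c3) = true ∧ (i.x1, i.x2) = (false, false) ∧ (i.y1 = false ∧ i.y2 = false ∧ i.z1 = false ∧ i.z2 = false))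
        = pr P (fun o i l => Bool.xor l.lA (Bool.xor o.b3 o.c3) = true ∧ i = s0) :=
      pr_congr P (by
        intro o i l
        rw [hs0]
        obtain ⟨j1, j2, j3, j4, j5, j6⟩ := i
        simp only [Prod.mk.injEq, Inputs.mk.injEq]
        tauto)
    have e5 : pr P (fun _ i _ => (i.x1, i.x2) = (false, false) ∧ (i.y1 = false ∧ i.y2 = false ∧ i.z1 = false ∧ i.z2 = false))
        = pr P (fun _ i _ => i = s0) :=
      pr_congr P (by
        intro o i l
        rw [hs0]
        obtain ⟨j1, j2, j3, j4, j5, j6⟩ := i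
        simp only [Prod.mk.injEq, Inputs.mk.injEq]
        tauto)
    rw [e4, e5] at h'
    exact h'
  have trRx : pr P (fun o i l => Bool.xor l.lA (Bool.xor o.b3 o.c3) = true ∧ i = s2) * pr P (fun _ i _ => i = s0)
      = pr P (fun o i l => Bool.xor l.lA (Bool.xor o.b3 o.c3) = true ∧ i = s0) * pr P (fun _ i _ => i = s2) :=
    mul_right_cancel₀ (ne_of_gt hCyz)
      (by linear_combination (pr P (fun _ i _ => i = s0)) * ERxa
        - (pr P (fun _ i _ => i = s2)) * ERxb)
  have hptRy : ∀ (a : Bool × Bool × Bool) (b : Bool × Bool),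
      pr P (fun o i l => (o.a3, l.lB, o.c3) = a ∧ (i.y1, i.y2) = b ∧ (i.x1 = false ∧ i.x2 = false ∧ i.z1 = false ∧ i.z2 = false))
        * pr P (fun _ i _ => i.x1 = false ∧ i.x2 = false ∧ i.z1 = false ∧ i.z2 = false)
      = pr P (fun o i l => (o.a3, l.lB, o.c3) = a ∧ (i.x1 = false ∧ i.x2 = false ∧ i.z1 = false ∧ i.z2 = false))
        * pr P (fun _ i _ => (i.y1, i.y2) = b ∧ (i.x1 = false ∧ i.x2 = false ∧ i.z1 = false ∧ i.z2 = false)) := by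
    rintro ⟨w1, w2, w3⟩ ⟨u1, u2⟩
    have e1 : pr P (fun o i l => (o.a3, l.lB, o.c3) = (w1, w2, w3) ∧ (i.y1, i.y2) = (u1, u2) ∧ (i.x1 = false ∧ i.x2 = false ∧ i.z1 = false ∧ i.z2 = false))
        = pr P (fun o i l => o.a3 = w1 ∧ l.lB = w2 ∧ o.c3 = w3 ∧ i.x1 = false ∧ i.x2 = false ∧ i.y1 = u1 ∧ i.y2 = u2 ∧ i.z1 = false ∧ i.z2 = false) :=
      pr_congr P (by intro o i l; simp only [Prod.mk.injEq]; tauto)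
    have e2 : pr P (fun o i l => (o.a3, l.lB, o.c3) = (w1, w2, w3) ∧ (i.x1 = false ∧ i.x2 = false ∧ i.z1 = false ∧ i.z2 = false))
        = pr P (fun o i l => o.a3 = w1 ∧ l.lB = w2 ∧ o.c3 = w3 ∧ i.x1 = false ∧ i.x2 = false ∧ i.z1 = false ∧ i.z2 = false) :=
      pr_congr P (by intro o i l; simp only [Prod.mk.injEq]; tauto)
    have e3 : pr P (fun _ i _ => (i.y1, i.y2) = (u1, u2) ∧ (i.x1 = false ∧ i.x2 = false ∧ i.z1 = false ∧ i.z2 = false))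
        = pr P (fun _ i _ => i.x1 = false ∧ i.x2 = false ∧ i.y1 = u1 ∧ i.y2 = u2 ∧ i.z1 = false ∧ i.z2 = false) :=
      pr_congr P (by intro o i l; simp only [Prod.mk.injEq]; tauto)
    rw [e1, e2, e3]
    exact hRCy w1 w2 w3 false false u1 u2 false false
  have ciRy := ci_lift P (fun o l => (o.a3, l.lB, o.c3)) (fun i => (i.y1, i.y2))
    (fun i => i.x1 = false ∧ i.x2 = false ∧ i.z1 = false ∧ i.z2 = false) hptRy
  have ERya : pr P (fun o i l => Bool.xor o.a3 (Bool.xor l.lB o.c3) = true ∧ i = s3) * pr P (fun _ i _ => i.x1 = false ∧ i.x2 = false ∧ i.z1 = false ∧ i.z2 = false)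
      = pr P (fun o i l => Bool.xor o.a3 (Bool.xor l.lB o.c3) = true ∧ (i.x1 = false ∧ i.x2 = false ∧ i.z1 = false ∧ i.z2 = false)) * pr P (fun _ i _ => i = s3) := by
    have h' : pr P (fun o i l => Bool.xor o.a3 (Bool.xor l.lB o.c3) = true ∧ (i.y1, i.y2) = (true, true) ∧ (i.x1 = false ∧ i.x2 = false ∧ i.z1 = false ∧ i.z2 = false)) * pr P (fun _ i _ => i.x1 = false ∧ i.x2 = false ∧ i.z1 = false ∧ i.z2 = false)
        = pr P (fun o i l => Bool.xor o.a3 (Bool.xor l.lB o.c3) = true ∧ (i.x1 = false ∧ i.x2 = false ∧ i.z1 = false ∧ i.z2 = false)) * pr P (fun _ i _ => (i.y1, i.y2) = (true, true) ∧ (i.x1 = false ∧ i.x2 = false ∧ i.z1 = false ∧ i.z2 = false)) :=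
      ciRy (fun a => Bool.xor a.1 (Bool.xor a.2.1 a.2.2) = true) (fun b => b = (true, true))
    have e4 : pr P (fun o i l => Bool.xor o.a3 (Bool.xor l.lB o.c3) = true ∧ (i.y1, i.y2) = (true, true) ∧ (i.x1 = false ∧ i.x2 = false ∧ i.z1 = false ∧ i.z2 = false))
        = pr P (fun o i l => Bool.xor o.a3 (Bool.xor l.lB o.c3) = true ∧ i = s3) :=
      pr_congr P (by
        intro o i l
        rw [hs3]
        obtain ⟨j1, j2, j3, j4, j5, j6⟩ := i
        simp only [Prod.mk.injEq, Inputs.mk.injEq]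
        tauto)
    have e5 : pr P (fun _ i _ => (i.y1, i.y2) = (true, true) ∧ (i.x1 = false ∧ i.x2 = false ∧ i.z1 = false ∧ i.z2 = false))
        = pr P (fun _ i _ => i = s3) :=
      pr_congr P (by
        intro o i l
        rw [hs3]
        obtain ⟨j1, j2, j3, j4, j5, j6⟩ := i
        simp only [Prod.mk.injEq, Inputs.mk.injEq]
        tauto)
    rw [e4, e5] at h'
    exact h'
  have ERyb : pr P (fun o i l => Bool.xor o.a3 (Bool.xor l.lB o.c3) = true ∧ i = s0) * pr P (fun _ i _ => i.x1 = false ∧ i.x2 = false ∧ i.z1 = false ∧ i.z2 = false)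
      = pr P (fun o i l => Bool.xor o.a3 (Bool.xor l.lB o.c3) = true ∧ (i.x1 = false ∧ i.x2 = false ∧ i.z1 = false ∧ i.z2 = false)) * pr P (fun _ i _ => i = s0) := by
    have h' : pr P (fun o i l => Bool.xor o.a3 (Bool.xor l.lB o.c3) = true ∧ (i.y1, i.y2) = (false, false) ∧ (i.x1 = false ∧ i.x2 = false ∧ i.z1 = false ∧ i.z2 = false)) * pr P (fun _ i _ => i.x1 = false ∧ i.x2 = false ∧ i.z1 = false ∧ i.z2 = false)
        = pr P (fun o i l => Bool.xor o.a3 (Bool.xor l.lB o.c3) = true ∧ (i.x1 = false ∧ i.x2 = false ∧ i.z1 = false ∧ i.z2 = false)) * pr P (fun _ i _ => (i.y1, i.y2) = (false, false) ∧ (i.x1 = false ∧ i.x2 = false ∧ i.z1 = false ∧ i.z2 = false)) :=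
      ciRy (fun a => Bool.xor a.1 (Bool.xor a.2.1 a.2.2) = true) (fun b => b = (false, false))
    have e4 : pr P (fun o i l => Bool.xor o.a3 (Bool.xor l.lB o.c3) = true ∧ (i.y1, i.y2) = (false, false) ∧ (i.x1 = false ∧ i.x2 = false ∧ i.z1 = false ∧ i.z2 = false))
        = pr P (fun o i l => Bool.xor o.a3 (Bool.xor l.lB o.c3) = true ∧ i = s0) :=
      pr_congr P (by
        intro o i l
        rw [hs0]
        obtain ⟨j1, j2, j3, j4, j5, j6⟩ := i
        simp only [Prod.mk.injEq, Inputs.mk.injEq]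
        tauto)
    have e5 : pr P (fun _ i _ => (i.y1, i.y2) = (false, false) ∧ (i.x1 = false ∧ i.x2 = false ∧ i.z1 = false ∧ i.z2 = false))
        = pr P (fun _ i _ => i = s0) :=
      pr_congr P (by
        intro o i l
        rw [hs0]
        obtain ⟨j1, j2, j3, j4, j5, j6⟩ := i
        simp only [Prod.mk.injEq, Inputs.mk.injEq]
        tauto)
    rw [e4, e5] at h'
    exact h'
  have trRy : pr P (fun o i l => Bool.xor o.a3 (Bool.xor l.lB o.c3) = true ∧ i = s3) * pr P (fun _ i _ => i = s0)
      = pr P (fun o i l => Bool.xor o.a3 (Bool.xor l.lB o.c3) = true ∧ i = s0) * pr P (fun _ i _ => i = s3) :=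
    mul_right_cancel₀ (ne_of_gt hCxz)
      (by linear_combination (pr P (fun _ i _ => i = s0)) * ERya
        - (pr P (fun _ i _ => i = s3)) * ERyb)
  have hptRz : ∀ (a : Bool × Bool × Bool) (b : Bool × Bool),
      pr P (fun o i l => (o.a3, o.b3, l.lC) = a ∧ (i.z1, i.z2) = b ∧ (i.x1 = false ∧ i.x2 = false ∧ i.y1 = false ∧ i.y2 = false))
        * pr P (fun _ i _ => i.x1 = false ∧ i.x2 = false ∧ i.y1 = false ∧ i.y2 = false)
      = pr P (fun o i l => (o.a3, o.b3, l.lC) = a ∧ (i.x1 = false ∧ i.x2 = false ∧ i.y1 = false ∧ i.y2 = false))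
        * pr P (fun _ i _ => (i.z1, i.z2) = b ∧ (i.x1 = false ∧ i.x2 = false ∧ i.y1 = false ∧ i.y2 = false)) := by
    rintro ⟨w1, w2, w3⟩ ⟨u1, u2⟩
    have e1 : pr P (fun o i l => (o.a3, o.b3, l.lC) = (w1, w2, w3) ∧ (i.z1, i.z2) = (u1, u2) ∧ (i.x1 = false ∧ i.x2 = false ∧ i.y1 = false ∧ i.y2 = false))
        = pr P (fun o i l => o.a3 = w1 ∧ o.b3 = w2 ∧ l.lC = w3 ∧ i.x1 = false ∧ i.x2 = false ∧ i.y1 = false ∧ i.y2 = false ∧ i.z1 = u1 ∧ i.z2 = u2) :=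
      pr_congr P (by intro o i l; simp only [Prod.mk.injEq]; tauto)
    have e2 : pr P (fun o i l => (o.a3, o.b3, l.lC) = (w1, w2, w3) ∧ (i.x1 = false ∧ i.x2 = false ∧ i.y1 = false ∧ i.y2 = false))
        = pr P (fun o i l => o.a3 = w1 ∧ o.b3 = w2 ∧ l.lC = w3 ∧ i.x1 = false ∧ i.x2 = false ∧ i.y1 = false ∧ i.y2 = false) :=
      pr_congr P (by intro o i l; simp only [Prod.mk.injEq]; tauto)
    have e3 : pr P (fun _ i _ => (i.z1, i.z2) = (u1, u2) ∧ (i.x1 = false ∧ i.x2 = false ∧ i.y1 = false ∧ i.y2 = false))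
        = pr P (fun _ i _ => i.x1 = false ∧ i.x2 = false ∧ i.y1 = false ∧ i.y2 = false ∧ i.z1 = u1 ∧ i.z2 = u2) :=
      pr_congr P (by intro o i l; simp only [Prod.mk.injEq]; tauto)
    rw [e1, e2, e3]
    exact hRCz w1 w2 w3 false false false false u1 u2
  have ciRz := ci_lift P (fun o l => (o.a3, o.b3, l.lC)) (fun i => (i.z1, i.z2))
    (fun i => i.x1 = false ∧ i.x2 = false ∧ i.y1 = false ∧ i.y2 = false) hptRz
  have ERza : pr P (fun o i l => Bool.xor o.a3 (Bool.xor o.b3 l.lC) = true ∧ i = s4) * pr P (fun _ i _ => i.x1 = false ∧ i.x2 = false ∧ i.y1 = false ∧ i.y2 = false)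
      = pr P (fun o i l => Bool.xor o.a3 (Bool.xor o.b3 l.lC) = true ∧ (i.x1 = false ∧ i.x2 = false ∧ i.y1 = false ∧ i.y2 = false)) * pr P (fun _ i _ => i = s4) := by
    have h' : pr P (fun o i l => Bool.xor o.a3 (Bool.xor o.b3 l.lC) = true ∧ (i.z1, i.z2) = (true, true) ∧ (i.x1 = false ∧ i.x2 = false ∧ i.y1 = false ∧ i.y2 = false)) * pr P (fun _ i _ => i.x1 = false ∧ i.x2 = false ∧ i.y1 = false ∧ i.y2 = false)
        = pr P (fun o i l => Bool.xor o.a3 (Bool.xor o.b3 l.lC) = true ∧ (i.x1 = false ∧ i.x2 = false ∧ i.y1 = false ∧ i.y2 = false)) * pr P (fun _ i _ => (i.z1, i.z2) = (true, true) ∧ (i.x1 = false ∧ i.x2 = false ∧ i.y1 = false ∧ i.y2 = false)) :=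
      ciRz (fun a => Bool.xor a.1 (Bool.xor a.2.1 a.2.2) = true) (fun b => b = (true, true))
    have e4 : pr P (fun o i l => Bool.xor o.a3 (Bool.xor o.b3 l.lC) = true ∧ (i.z1, i.z2) = (true, true) ∧ (i.x1 = false ∧ i.x2 = false ∧ i.y1 = false ∧ i.y2 = false))
        = pr P (fun o i l => Bool.xor o.a3 (Bool.xor o.b3 l.lC) = true ∧ i = s4) :=
      pr_congr P (by
        intro o i l
        rw [hs4]
        obtain ⟨j1, j2, j3, j4, j5, j6⟩ := i
        simp only [Prod.mk.injEq, Inputs.mk.injEq]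
        tauto)
    have e5 : pr P (fun _ i _ => (i.z1, i.z2) = (true, true) ∧ (i.x1 = false ∧ i.x2 = false ∧ i.y1 = false ∧ i.y2 = false))
        = pr P (fun _ i _ => i = s4) :=
      pr_congr P (by
        intro o i l
        rw [hs4]
        obtain ⟨j1, j2, j3, j4, j5, j6⟩ := i
        simp only [Prod.mk.injEq, Inputs.mk.injEq]
        tauto)
    rw [e4, e5] at h'
    exact h'
  have ERzb : pr P (fun o i l => Bool.xor o.a3 (Bool.xor o.b3 l.lC) = true ∧ i = s0) * pr P (fun _ i _ => i.x1 = false ∧ i.x2 = false ∧ i.y1 = false ∧ i.y2 = false)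
      = pr P (fun o i l => Bool.xor o.a3 (Bool.xor o.b3 l.lC) = true ∧ (i.x1 = false ∧ i.x2 = false ∧ i.y1 = false ∧ i.y2 = false)) * pr P (fun _ i _ => i = s0) := by
    have h' : pr P (fun o i l => Bool.xor o.a3 (Bool.xor o.b3 l.lC) = true ∧ (i.z1, i.z2) = (false, false) ∧ (i.x1 = false ∧ i.x2 = false ∧ i.y1 = false ∧ i.y2 = false)) * pr P (fun _ i _ => i.x1 = false ∧ i.x2 = false ∧ i.y1 = false ∧ i.y2 = false)
        = pr P (fun o i l => Bool.xor o.a3 (Bool.xor o.b3 l.lC) = true ∧ (i.x1 = false ∧ i.x2 = false ∧ i.y1 = false ∧ i.y2 = false)) * pr P (fun _ i _ => (i.z1, i.z2) = (false, false) ∧ (i.x1 = false ∧ i.x2 = false ∧ i.y1 = false ∧ i.y2 = false)) :=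
      ciRz (fun a => Bool.xor a.1 (Bool.xor a.2.1 a.2.2) = true) (fun b => b = (false, false))
    have e4 : pr P (fun o i l => Bool.xor o.a3 (Bool.xor o.b3 l.lC) = true ∧ (i.z1, i.z2) = (false, false) ∧ (i.x1 = false ∧ i.x2 = false ∧ i.y1 = false ∧ i.y2 = false))
        = pr P (fun o i l => Bool.xor o.a3 (Bool.xor o.b3 l.lC) = true ∧ i = s0) :=
      pr_congr P (by
        intro o i l
        rw [hs0]
        obtain ⟨j1, j2, j3, j4, j5, j6⟩ := i
        simp only [Prod.mk.injEq, Inputs.mk.injEq]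
        tauto)
    have e5 : pr P (fun _ i _ => (i.z1, i.z2) = (false, false) ∧ (i.x1 = false ∧ i.x2 = false ∧ i.y1 = false ∧ i.y2 = false))
        = pr P (fun _ i _ => i = s0) :=
      pr_congr P (by
        intro o i l
        rw [hs0]
        obtain ⟨j1, j2, j3, j4, j5, j6⟩ := i
        simp only [Prod.mk.injEq, Inputs.mk.injEq]
        tauto)
    rw [e4, e5] at h'
    exact h'
  have trRz : pr P (fun o i l => Bool.xor o.a3 (Bool.xor o.b3 l.lC) = true ∧ i = s4) * pr P (fun _ i _ => i = s0)
      = pr P (fun o i l => Bool.xor o.a3 (Bool.xor o.b3 l.lC) = true ∧ i = s0) * pr P (fun _ i _ => i = s4) :=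
    mul_right_cancel₀ (ne_of_gt hCxy)
      (by linear_combination (pr P (fun _ i _ => i = s0)) * ERza
        - (pr P (fun _ i _ => i = s4)) * ERzb)
  -- pointwise Mermin decompositions
  have hb1 : pr P (fun o i l => Bool.xor o.a1 (Bool.xor o.b1 o.c1) = false ∧ i = s1)
      ≤ pr P (fun _ i l => Bool.xor l.lA (Bool.xor l.lB l.lC) = false ∧ i = s1)
        + pr P (fun o i l => ¬(o.a1 = l.lA) ∧ i = s1)
        + pr P (fun o i l => ¬(o.b1 = l.lB) ∧ i = s1)
        + pr P (fun o i l => ¬(o.c1 = l.lC) ∧ i = s1) := by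
    refine pr_le_add4 P hnn fun o i l => ?_
    rintro ⟨hx, hi⟩
    rcases merminBool1 o.a1 o.b1 o.c1 l.lA l.lB l.lC hx with h | h | h | h
    · exact Or.inl ⟨h, hi⟩
    · exact Or.inr (Or.inl ⟨h, hi⟩)
    · exact Or.inr (Or.inr (Or.inl ⟨h, hi⟩))
    · exact Or.inr (Or.inr (Or.inr ⟨h, hi⟩))
  have hb2 : pr P (fun o i l => Bool.xor o.a1 (Bool.xor o.b3 o.c3) = true ∧ i = s2)
      ≤ pr P (fun o i l => Bool.xor l.lA (Bool.xor o.b3 o.c3) = true ∧ i = s2)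
        + pr P (fun o i l => ¬(o.a1 = l.lA) ∧ i = s2) := by
    refine pr_le_add2 P hnn fun o i l => ?_
    rintro ⟨hx, hi⟩
    rcases merminBool2 o.a1 o.b3 o.c3 l.lA hx with h | h
    · exact Or.inl ⟨h, hi⟩
    · exact Or.inr ⟨h, hi⟩
  have hb3 : pr P (fun o i l => Bool.xor o.a3 (Bool.xor o.b1 o.c3) = true ∧ i = s3)
      ≤ pr P (fun o i l => Bool.xor o.a3 (Bool.xor l.lB o.c3) = true ∧ i = s3)
        + pr P (fun o i l => ¬(o.b1 = l.lB) ∧ i = s3) := by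
    refine pr_le_add2 P hnn fun o i l => ?_
    rintro ⟨hx, hi⟩
    rcases merminBool2b o.a3 o.b1 o.c3 l.lB hx with h | h
    · exact Or.inl ⟨h, hi⟩
    · exact Or.inr ⟨h, hi⟩
  have hb4 : pr P (fun o i l => Bool.xor o.a3 (Bool.xor o.b3 o.c1) = true ∧ i = s4)
      ≤ pr P (fun o i l => Bool.xor o.a3 (Bool.xor o.b3 l.lC) = true ∧ i = s4)
        + pr P (fun o i l => ¬(o.c1 = l.lC) ∧ i = s4) := by
    refine pr_le_add2 P hnn fun o i l => ?_
    rintro ⟨hx, hi⟩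
    rcases merminBool2c o.a3 o.b3 o.c1 l.lC hx with h | h
    · exact Or.inl ⟨h, hi⟩
    · exact Or.inr ⟨h, hi⟩
  -- Mermin bound at the all-false setting
  have hfour : pr P (fun _ i l => Bool.xor l.lA (Bool.xor l.lB l.lC) = false ∧ i = s0)
        + pr P (fun o i l => Bool.xor l.lA (Bool.xor o.b3 o.c3) = true ∧ i = s0)
        + pr P (fun o i l => Bool.xor o.a3 (Bool.xor l.lB o.c3) = true ∧ i = s0)
        + pr P (fun o i l => Bool.xor o.a3 (Bool.xor o.b3 l.lC) = true ∧ i = s0)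
      ≤ 3 * pr P (fun _ i _ => i = s0) := by
    refine pr_four_le_three P hnn ?_ (fun o i l h => h.2) (fun o i l h => h.2)
      (fun o i l h => h.2) (fun o i l h => h.2)
    rintro o i l ⟨⟨h1, -⟩, ⟨h2, -⟩, ⟨h3, -⟩, ⟨h4, -⟩⟩
    exact merminBool4 o.a3 o.b3 o.c3 l.lA l.lB l.lC ⟨h1, h2, h3, h4⟩
  -- ratio forms
  have rA1 : pr P (fun o i l => ¬(o.a1 = l.lA) ∧ i = s1) / pr P (fun _ i _ => i = s1)
      = pr P (fun o i l => ¬(o.a1 = l.lA) ∧ (i.x1 = true ∧ i.x2 = true)) / pr P (fun _ i _ => i.x1 = true ∧ i.x2 = true) := by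
    rw [div_eq_div_iff (ne_of_gt (hin s1)) (ne_of_gt (hπx true true))]
    linear_combination trA1
  have rA2 : pr P (fun o i l => ¬(o.a1 = l.lA) ∧ i = s2) / pr P (fun _ i _ => i = s2)
      = pr P (fun o i l => ¬(o.a1 = l.lA) ∧ (i.x1 = true ∧ i.x2 = true)) / pr P (fun _ i _ => i.x1 = true ∧ i.x2 = true) := by
    rw [div_eq_div_iff (ne_of_gt (hin s2)) (ne_of_gt (hπx true true))]
    linear_combination trA2
  have rB1 : pr P (fun o i l => ¬(o.b1 = l.lB) ∧ i = s1) / pr P (fun _ i _ => i = s1)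
      = pr P (fun o i l => ¬(o.b1 = l.lB) ∧ (i.y1 = true ∧ i.y2 = true)) / pr P (fun _ i _ => i.y1 = true ∧ i.y2 = true) := by
    rw [div_eq_div_iff (ne_of_gt (hin s1)) (ne_of_gt (hπy true true))]
    linear_combination trB1
  have rB3 : pr P (fun o i l => ¬(o.b1 = l.lB) ∧ i = s3) / pr P (fun _ i _ => i = s3)
      = pr P (fun o i l => ¬(o.b1 = l.lB) ∧ (i.y1 = true ∧ i.y2 = true)) / pr P (fun _ i _ => i.y1 = true ∧ i.y2 = true) := by
    rw [div_eq_div_iff (ne_of_gt (hin s3)) (ne_of_gt (hπy true true))]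
    linear_combination trB3
  have rC1 : pr P (fun o i l => ¬(o.c1 = l.lC) ∧ i = s1) / pr P (fun _ i _ => i = s1)
      = pr P (fun o i l => ¬(o.c1 = l.lC) ∧ (i.z1 = true ∧ i.z2 = true)) / pr P (fun _ i _ => i.z1 = true ∧ i.z2 = true) := by
    rw [div_eq_div_iff (ne_of_gt (hin s1)) (ne_of_gt (hπz true true))]
    linear_combination trC1
  have rC4 : pr P (fun o i l => ¬(o.c1 = l.lC) ∧ i = s4) / pr P (fun _ i _ => i = s4)
      = pr P (fun o i l => ¬(o.c1 = l.lC) ∧ (i.z1 = true ∧ i.z2 = true)) / pr P (fun _ i _ => i.z1 = true ∧ i.z2 = true) := by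
    rw [div_eq_div_iff (ne_of_gt (hin s4)) (ne_of_gt (hπz true true))]
    linear_combination trC4
  have rF1 : pr P (fun o i l => Bool.xor l.lA (Bool.xor l.lB l.lC) = false ∧ i = s1) / pr P (fun _ i _ => i = s1)
      = pr P (fun o i l => Bool.xor l.lA (Bool.xor l.lB l.lC) = false ∧ i = s0) / pr P (fun _ i _ => i = s0) := by
    rw [div_eq_div_iff (ne_of_gt (hin s1)) (ne_of_gt (hin s0))]
    linear_combination trF1
  have rF2 : pr P (fun o i l => Bool.xor l.lA (Bool.xor o.b3 o.c3) = true ∧ i = s2) / pr P (fun _ i _ => i = s2)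
      = pr P (fun o i l => Bool.xor l.lA (Bool.xor o.b3 o.c3) = true ∧ i = s0) / pr P (fun _ i _ => i = s0) := by
    rw [div_eq_div_iff (ne_of_gt (hin s2)) (ne_of_gt (hin s0))]
    linear_combination trRx
  have rF3 : pr P (fun o i l => Bool.xor o.a3 (Bool.xor l.lB o.c3) = true ∧ i = s3) / pr P (fun _ i _ => i = s3)
      = pr P (fun o i l => Bool.xor o.a3 (Bool.xor l.lB o.c3) = true ∧ i = s0) / pr P (fun _ i _ => i = s0) := by
    rw [div_eq_div_iff (ne_of_gt (hin s3)) (ne_of_gt (hin s0))]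
    linear_combination trRy
  have rF4 : pr P (fun o i l => Bool.xor o.a3 (Bool.xor o.b3 l.lC) = true ∧ i = s4) / pr P (fun _ i _ => i = s4)
      = pr P (fun o i l => Bool.xor o.a3 (Bool.xor o.b3 l.lC) = true ∧ i = s0) / pr P (fun _ i _ => i = s0) := by
    rw [div_eq_div_iff (ne_of_gt (hin s4)) (ne_of_gt (hin s0))]
    linear_combination trRz
  have mA : pr P (fun o i l => ¬(o.a1 = l.lA) ∧ (i.x1 = true ∧ i.x2 = true)) / pr P (fun _ i _ => i.x1 = true ∧ i.x2 = true)
      ≤ pr P (fun o i l => o.a1 = true ∧ (i.x1 = true ∧ i.x2 = false)) / pr P (fun _ i _ => i.x1 = true ∧ i.x2 = false)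
        + pr P (fun o i l => o.a2 = true ∧ (i.x1 = false ∧ i.x2 = true)) / pr P (fun _ i _ => i.x1 = false ∧ i.x2 = true)
        + pr P (fun o i l => (o.a1 = false ∧ o.a2 = false) ∧ (i.x1 = true ∧ i.x2 = true)) / pr P (fun _ i _ => i.x1 = true ∧ i.x2 = true) := by
    rw [div_le_iff₀ (hπx true true)]
    exact hpartyA
  have mB : pr P (fun o i l => ¬(o.b1 = l.lB) ∧ (i.y1 = true ∧ i.y2 = true)) / pr P (fun _ i _ => i.y1 = true ∧ i.y2 = true)
      ≤ pr P (fun o i l => o.b1 = true ∧ (i.y1 = true ∧ i.y2 = false)) / pr P (fun _ i _ => i.y1 = true ∧ i.y2 = false)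
        + pr P (fun o i l => o.b2 = true ∧ (i.y1 = false ∧ i.y2 = true)) / pr P (fun _ i _ => i.y1 = false ∧ i.y2 = true)
        + pr P (fun o i l => (o.b1 = false ∧ o.b2 = false) ∧ (i.y1 = true ∧ i.y2 = true)) / pr P (fun _ i _ => i.y1 = true ∧ i.y2 = true) := by
    rw [div_le_iff₀ (hπy true true)]
    exact hpartyB
  have mC : pr P (fun o i l => ¬(o.c1 = l.lC) ∧ (i.z1 = true ∧ i.z2 = true)) / pr P (fun _ i _ => i.z1 = true ∧ i.z2 = true)
      ≤ pr P (fun o i l => o.c1 = true ∧ (i.z1 = true ∧ i.z2 = false)) / pr P (fun _ i _ => i.z1 = true ∧ i.z2 = false)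
        + pr P (fun o i l => o.c2 = true ∧ (i.z1 = false ∧ i.z2 = true)) / pr P (fun _ i _ => i.z1 = false ∧ i.z2 = true)
        + pr P (fun o i l => (o.c1 = false ∧ o.c2 = false) ∧ (i.z1 = true ∧ i.z2 = true)) / pr P (fun _ i _ => i.z1 = true ∧ i.z2 = true) := by
    rw [div_le_iff₀ (hπz true true)]
    exact hpartyC
  have hI1 : pr P (fun o i l => Bool.xor o.a1 (Bool.xor o.b1 o.c1) = false ∧ i = s1) / pr P (fun _ i _ => i = s1)
      ≤ pr P (fun o i l => Bool.xor l.lA (Bool.xor l.lB l.lC) = false ∧ i = s1) / pr P (fun _ i _ => i = s1)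
        + pr P (fun o i l => ¬(o.a1 = l.lA) ∧ i = s1) / pr P (fun _ i _ => i = s1)
        + pr P (fun o i l => ¬(o.b1 = l.lB) ∧ i = s1) / pr P (fun _ i _ => i = s1)
        + pr P (fun o i l => ¬(o.c1 = l.lC) ∧ i = s1) / pr P (fun _ i _ => i = s1) := by
    rw [← add_div, ← add_div, ← add_div]
    exact (div_le_div_iff_of_pos_right (hin s1)).mpr hb1
  have hI2 : pr P (fun o i l => Bool.xor o.a1 (Bool.xor o.b3 o.c3) = true ∧ i = s2) / pr P (fun _ i _ => i = s2)
      ≤ pr P (fun o i l => Bool.xor l.lA (Bool.xor o.b3 o.c3) = true ∧ i = s2) / pr P (fun _ i _ => i = s2)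
        + pr P (fun o i l => ¬(o.a1 = l.lA) ∧ i = s2) / pr P (fun _ i _ => i = s2) := by
    rw [← add_div]
    exact (div_le_div_iff_of_pos_right (hin s2)).mpr hb2
  have hI3 : pr P (fun o i l => Bool.xor o.a3 (Bool.xor o.b1 o.c3) = true ∧ i = s3) / pr P (fun _ i _ => i = s3)
      ≤ pr P (fun o i l => Bool.xor o.a3 (Bool.xor l.lB o.c3) = true ∧ i = s3) / pr P (fun _ i _ => i = s3)
        + pr P (fun o i l => ¬(o.b1 = l.lB) ∧ i = s3) / pr P (fun _ i _ => i = s3) := by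
    rw [← add_div]
    exact (div_le_div_iff_of_pos_right (hin s3)).mpr hb3
  have hI4 : pr P (fun o i l => Bool.xor o.a3 (Bool.xor o.b3 o.c1) = true ∧ i = s4) / pr P (fun _ i _ => i = s4)
      ≤ pr P (fun o i l => Bool.xor o.a3 (Bool.xor o.b3 l.lC) = true ∧ i = s4) / pr P (fun _ i _ => i = s4)
        + pr P (fun o i l => ¬(o.c1 = l.lC) ∧ i = s4) / pr P (fun _ i _ => i = s4) := by
    rw [← add_div]
    exact (div_le_div_iff_of_pos_right (hin s4)).mpr hb4
  have hJ : pr P (fun _ i l => Bool.xor l.lA (Bool.xor l.lB l.lC) = false ∧ i = s0) / pr P (fun _ i _ => i = s0)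
        + pr P (fun o i l => Bool.xor l.lA (Bool.xor o.b3 o.c3) = true ∧ i = s0) / pr P (fun _ i _ => i = s0)
        + pr P (fun o i l => Bool.xor o.a3 (Bool.xor l.lB o.c3) = true ∧ i = s0) / pr P (fun _ i _ => i = s0)
        + pr P (fun o i l => Bool.xor o.a3 (Bool.xor o.b3 l.lC) = true ∧ i = s0) / pr P (fun _ i _ => i = s0)
      ≤ 3 := by
    rw [← add_div, ← add_div, ← add_div, div_le_iff₀ (hin s0)]
    exact hfour
  linarith [hI1, hI2, hI3, hI4, rA1, rA2, rB1, rB3, rC1, rC4, rF1, rF2, rF3, rF4, mA, mB, mC, hJ]
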